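/- arXiv:0906.5236 — 5 statements merged into one kernel-verified Lean document; each statement's English description precedes it below -/
import Mathlib

section
/- Let A be the free associative ℚ-algebra on generators x₁, x₂, …, graded by deg xₙ = n, and let Â be its completion with respect to the grading. There exists a unique sequence (ζₙ)ₙ≥1 of homogeneous elements of Â with deg ζₙ = n such that 1 + Σₙ≥1 xₙ equals the ordered product ⋯ · exp(ζ₃) · exp(ζ₂) · exp(ζ₁) in Â (product taken over decreasing indices from left to right as indices increase). -/
/- We model the completion `Â` of the free associative ℚ-algebra on generators
`x₁, x₂, …` (with `deg xₙ = n`) as the power-series ring over the free algebra,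
where the formal variable `t` records the degree: the generator `xₙ` is
represented by `(FreeAlgebra.ι ℚ n) · tⁿ`, and a homogeneous element of degree
`n` is represented by `c · tⁿ` with `c` in the free algebra. -/

/-- The formal exponential `exp (c · tᵏ) = ∑ⱼ cʲ tᵏʲ / j!` (for `k ≥ 1`). -/
noncomputable def expPow {R : Type*} [Ring R] [Algebra ℚ R] (k : ℕ) (c : R) :
    PowerSeries R :=
  PowerSeries.mk fun m =>
    if k ∣ m then (algebraMap ℚ R (((m / k).factorial : ℚ)⁻¹)) * c ^ (m / k) else 0

/-- The ordered partial product `exp(ζ_N t^N) ⋯ exp(ζ₂ t²) · exp(ζ₁ t)`,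
with indices decreasing from left to right. -/
noncomputable def zassDown {R : Type*} [Ring R] [Algebra ℚ R] (ζ : ℕ → R) (N : ℕ) :
    PowerSeries R :=
  (((List.range N).reverse).map (fun k => expPow (k + 1) (ζ (k + 1)))).prod

/-- The series `1 + ∑_{n ≥ 1} xₙ tⁿ` over the free algebra on the `xₙ`. -/
noncomputable def genSeries : PowerSeries (FreeAlgebra ℚ ℕ) :=
  PowerSeries.mk fun n => if n = 0 then 1 else FreeAlgebra.ι ℚ n

section aux
variable {R : Type*} [Ring R] [Algebra ℚ R]

lemma coeff_expPow_zero (k : ℕ) (c : R) :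
    PowerSeries.coeff 0 (expPow k c) = 1 := by
  simp [expPow]

lemma coeff_expPow_self (k : ℕ) (hk : 1 ≤ k) (c : R) :
    PowerSeries.coeff k (expPow k c) = c := by
  simp [expPow, Nat.div_self hk]

lemma coeff_expPow_not_dvd {k m : ℕ} (h : ¬ k ∣ m) (c : R) :
    PowerSeries.coeff m (expPow k c) = 0 := by
  simp [expPow, h]

lemma zassDown_succ (ζ : ℕ → R) (N : ℕ) :
    zassDown ζ (N + 1) = expPow (N + 1) (ζ (N + 1)) * zassDown ζ N := by
  simp [zassDown, List.range_succ]

lemma constantCoeff_zassDown (ζ : ℕ → R) (N : ℕ) :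
    PowerSeries.constantCoeff (zassDown ζ N) = 1 := by
  induction N with
  | zero => simp [zassDown]
  | succ N ih =>
      rw [zassDown_succ, map_mul, ih, mul_one,
        ← PowerSeries.coeff_zero_eq_constantCoeff_apply, coeff_expPow_zero]

lemma coeff_mul_expPow {n k : ℕ} (hn : n < k) (c : R) (φ : PowerSeries R) :
    PowerSeries.coeff n (expPow k c * φ) = PowerSeries.coeff n φ := by
  rw [PowerSeries.coeff_mul]
  rw [Finset.sum_eq_single (0, n)]
  · simp [coeff_expPow_zero]
  · rintro ⟨i, j⟩ hmem hne
    rw [Finset.HasAntidiagonal.mem_antidiagonal] at hmem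
    have hi : i ≠ 0 := by
      rintro rfl; simp only [Prod.fst, Prod.snd, zero_add] at hmem
      subst hmem; exact hne rfl
    have : ¬ k ∣ i := by
      intro hdvd
      have := Nat.le_of_dvd (Nat.pos_of_ne_zero hi) hdvd
      omega
    rw [coeff_expPow_not_dvd this, zero_mul]
  · intro h
    exact absurd (by simp) h

lemma coeff_self_mul_expPow {k : ℕ} (hk : 1 ≤ k) (c : R) (φ : PowerSeries R) :
    PowerSeries.coeff k (expPow k c * φ) =
      PowerSeries.coeff k φ + c * PowerSeries.constantCoeff φ := by
  rw [PowerSeries.coeff_mul]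
  have h0 : ((0 : ℕ), k) ∈ Finset.HasAntidiagonal.antidiagonal k := by simp
  have h1 : ((k : ℕ), 0) ∈ Finset.HasAntidiagonal.antidiagonal k := by simp
  have hne : ((0 : ℕ), k) ≠ (k, 0) := by
    intro h; apply_fun Prod.fst at h; simp at h; omega
  rw [Finset.sum_eq_add_of_mem _ _ h0 h1 hne]
  · rw [coeff_expPow_zero, one_mul, coeff_expPow_self k hk,
      PowerSeries.coeff_zero_eq_constantCoeff_apply]
  · rintro ⟨i, j⟩ hmem ⟨hne0, hnek⟩
    rw [Finset.HasAntidiagonal.mem_antidiagonal] at hmem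
    have hi : i ≠ 0 := by
      rintro rfl; simp only [Prod.fst, Prod.snd, zero_add] at hmem
      subst hmem; exact hne0 rfl
    have hik : i ≠ k := by
      rintro rfl
      have : j = 0 := by omega
      subst this; exact hnek rfl
    have : ¬ k ∣ i := by
      intro hdvd
      have := Nat.le_of_dvd (Nat.pos_of_ne_zero hi) hdvd
      omega
    rw [coeff_expPow_not_dvd this, zero_mul]

lemma zassDown_congr {ζ ζ' : ℕ → R} {N : ℕ}
    (h : ∀ k, 1 ≤ k → k ≤ N → ζ k = ζ' k) : zassDown ζ N = zassDown ζ' N := by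
  unfold zassDown
  congr 1
  apply List.map_congr_left
  intro k hk
  rw [List.mem_reverse, List.mem_range] at hk
  rw [h (k + 1) (by omega) (by omega)]

lemma coeff_zassDown_stable (ζ : ℕ → R) {n N : ℕ} (h : n ≤ N) :
    PowerSeries.coeff n (zassDown ζ N) = PowerSeries.coeff n (zassDown ζ n) := by
  induction N with
  | zero => have : n = 0 := by omega
            subst this; rfl
  | succ N ih =>
      rcases Nat.lt_or_ge n (N + 1) with hlt | hge
      · rw [zassDown_succ, coeff_mul_expPow hlt, ih (by omega)]
      · have : n = N + 1 := by omega
        subst this; rfl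

lemma coeff_zassDown_succ_self (ζ : ℕ → R) (m : ℕ) :
    PowerSeries.coeff (m + 1) (zassDown ζ (m + 1)) =
      PowerSeries.coeff (m + 1) (zassDown ζ m) + ζ (m + 1) := by
  rw [zassDown_succ, coeff_self_mul_expPow (by omega), constantCoeff_zassDown, mul_one]

end aux

noncomputable def zeta : ℕ → FreeAlgebra ℚ ℕ
  | 0 => 0
  | (m+1) => FreeAlgebra.ι ℚ (m+1) - PowerSeries.coeff (m+1)
      (zassDown (fun k => if h : k < m+1 then zeta k else 0) m)

lemma zeta_zero : zeta 0 = 0 := by rw [zeta]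

lemma zeta_succ (m : ℕ) :
    zeta (m + 1) = FreeAlgebra.ι ℚ (m+1) -
      PowerSeries.coeff (m+1) (zassDown zeta m) := by
  rw [zeta]
  congr 1
  congr 1
  apply zassDown_congr
  intro k hk1 hkm
  rw [dif_pos (by omega)]

lemma coeff_zassDown_zeta (n : ℕ) :
    PowerSeries.coeff n (zassDown zeta n) = PowerSeries.coeff n genSeries := by
  cases n with
  | zero =>
      rw [PowerSeries.coeff_zero_eq_constantCoeff_apply, constantCoeff_zassDown]
      simp [genSeries]
  | succ m =>
      rw [coeff_zassDown_succ_self, zeta_succ]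
      simp [genSeries]


/-- There is a unique sequence `(ζₙ)_{n ≥ 1}` of homogeneous elements of degree `n`
(encoded as `ζ n · tⁿ`) with `1 + ∑ₙ xₙ = ⋯ exp(ζ₃) exp(ζ₂) exp(ζ₁)`,
the ordered infinite product being understood as the coefficientwise limit of
its partial products (which stabilize degree by degree). -/
theorem stmt_1 :
    ∃! ζ : ℕ → FreeAlgebra ℚ ℕ, ζ 0 = 0 ∧
      ∀ n N : ℕ, n ≤ N →
        PowerSeries.coeff n (zassDown ζ N) = PowerSeries.coeff n genSeries := by
  refine ⟨zeta, ⟨zeta_zero, fun n N hnN => ?_⟩, ?_⟩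
  · rw [coeff_zassDown_stable zeta hnN, coeff_zassDown_zeta]
  · rintro ζ ⟨h0, hζ⟩
    funext n
    induction n using Nat.strong_induction_on with
    | _ n ih =>
      match n with
      | 0 => rw [h0, zeta_zero]
      | (m+1) =>
        have key : PowerSeries.coeff (m+1) (zassDown ζ (m+1)) =
            PowerSeries.coeff (m+1) genSeries := hζ (m+1) (m+1) le_rfl
        rw [coeff_zassDown_succ_self] at key
        have hcongr : zassDown ζ m = zassDown zeta m :=
          zassDown_congr fun k hk1 hkm => ih k (by omega)
        rw [zeta_succ, ← hcongr]
        have : PowerSeries.coeff (m+1) genSeries = FreeAlgebra.ι ℚ (m+1) := by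
          simp [genSeries]
        rw [this] at key
        exact eq_sub_of_add_eq' key
end

section
/- The number of compositions (i₀; i₁, …, i_p) of n (with p ≥ 0) in which the first part i₀ is even and allowed to be 0, and all remaining parts i₁, …, i_p are odd positive integers, equals the Fibonacci number F(n+1), where F(1) = F(2) = 1. -/
private def Oset (n : ℕ) : Set (List ℕ) := {l | (∀ x ∈ l, Odd x) ∧ l.sum = n}

private def Sset (n : ℕ) : Set (ℕ × List ℕ) :=
  {p | Even p.1 ∧ (∀ x ∈ p.2, Odd x) ∧ p.1 + p.2.sum = n}

private lemma odd_pos' {x : ℕ} (h : Odd x) : 0 < x := by rcases h with ⟨k, rfl⟩; omega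

private lemma Oset_finite (n : ℕ) : (Oset n).Finite := by
  have h : Oset n ⊆ (fun c : Composition n => c.blocks) '' Set.univ := by
    rintro l ⟨h1, h2⟩
    exact ⟨⟨l, fun hi => odd_pos' (h1 _ hi), h2⟩, trivial, rfl⟩
  exact (Set.finite_univ.image _).subset h

private lemma Sset_finite (n : ℕ) : (Sset n).Finite := by
  have h : Sset n ⊆ ⋃ e ∈ Finset.range (n+1), ({e} : Set ℕ) ×ˢ Oset (n - e) := by
    rintro ⟨e, l⟩ ⟨he, hl, hsum⟩
    simp only [Set.mem_iUnion]
    simp only [Sset, Set.mem_setOf_eq] at hsum hl he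
    exact ⟨e, Finset.mem_range.mpr (by omega), rfl, hl, by simp at hsum ⊢; omega⟩
  exact (Set.Finite.biUnion (Finset.range (n+1)).finite_toSet
    (fun e _ => (Set.finite_singleton e).prod (Oset_finite (n - e)))).subset h

private lemma Oset_zero : Oset 0 = {[]} := by
  ext l
  constructor
  · rintro ⟨h1, h2⟩
    cases l with
    | nil => rfl
    | cons x t =>
      exfalso
      have := odd_pos' (h1 x (by simp))
      simp [List.sum_cons] at h2
      omega
  · rintro rfl
    exact ⟨by simp, rfl⟩

private lemma Oset_one : Oset 1 = {[1]} := by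
  ext l
  constructor
  · rintro ⟨h1, h2⟩
    cases l with
    | nil => simp at h2
    | cons x t =>
      have hx := odd_pos' (h1 x (by simp))
      simp [List.sum_cons] at h2
      have hx1 : x = 1 := by omega
      have ht : t = [] := by
        have : t ∈ Oset 0 := ⟨fun y hy => h1 y (by simp [hy]), by omega⟩
        rwa [Oset_zero] at this
      simp [hx1, ht]
  · rintro rfl
    exact ⟨by simp, rfl⟩

private lemma Oset_two : Oset 2 = {[1, 1]} := by
  ext l
  constructor
  · rintro ⟨h1, h2⟩
    cases l with
    | nil => simp at h2
    | cons x t =>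
      have hx := h1 x (by simp)
      have hx1 : x = 1 := by rcases hx with ⟨k, rfl⟩; simp [List.sum_cons] at h2; omega
      have ht : t = [1] := by
        have : t ∈ Oset 1 := ⟨fun y hy => h1 y (by simp [hy]), by
          simp [List.sum_cons] at h2; omega⟩
        rwa [Oset_one] at this
      simp [hx1, ht]
  · rintro rfl
    exact ⟨by rintro x hx; simp at hx; simp [hx], rfl⟩

private lemma Oset_rec (n : ℕ) :
    Oset (n+3) = (List.cons 1) '' Oset (n+2) ∪
      (fun l => (l.headI + 2) :: l.tail) '' Oset (n+1) := by
  ext l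
  constructor
  · rintro ⟨h1, h2⟩
    cases l with
    | nil => simp at h2
    | cons x t =>
      have hx := h1 x (by simp)
      rcases Nat.lt_or_ge x 2 with h | h
      · have hx1 : x = 1 := by rcases hx with ⟨k, rfl⟩; omega
        subst hx1
        left
        exact ⟨t, ⟨fun y hy => h1 y (by simp [hy]), by simp [List.sum_cons] at h2; omega⟩, rfl⟩
      · right
        refine ⟨(x - 2) :: t, ⟨?_, ?_⟩, ?_⟩
        · rintro y hy
          rcases List.mem_cons.mp hy with rfl | hy
          · rcases hx with ⟨k, rfl⟩; exact ⟨k - 1, by omega⟩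
          · exact h1 y (by simp [hy])
        · simp [List.sum_cons] at h2 ⊢; omega
        · show (x - 2 + 2) :: t = x :: t
          have : x - 2 + 2 = x := by omega
          rw [this]
  · rintro (⟨t, ⟨ht1, ht2⟩, rfl⟩ | ⟨t, ⟨ht1, ht2⟩, rfl⟩)
    · refine ⟨?_, ?_⟩
      · rintro y hy
        rcases List.mem_cons.mp hy with rfl | hy
        · exact ⟨0, by omega⟩
        · exact ht1 y hy
      · simp only [List.sum_cons, ht2]; omega
    · cases t with
      | nil => simp at ht2
      | cons x s =>
        refine ⟨?_, ?_⟩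
        · rintro y hy
          rcases List.mem_cons.mp hy with rfl | hy
          · rcases ht1 x (by simp) with ⟨k, hk⟩
            exact ⟨k + 1, by simp [List.headI]; omega⟩
          · exact ht1 y (by simp at hy; simp [hy])
        · simp [List.sum_cons] at ht2 ⊢
          omega

private lemma Oset_ncard_rec (n : ℕ) :
    (Oset (n+3)).ncard = (Oset (n+2)).ncard + (Oset (n+1)).ncard := by
  rw [Oset_rec]
  have hdisj : Disjoint ((List.cons 1) '' Oset (n+2))
      ((fun l => (l.headI + 2) :: l.tail) '' Oset (n+1)) := by
    rw [Set.disjoint_left]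
    rintro l ⟨t, _, rfl⟩ ⟨t', _, h⟩
    simp only [List.cons.injEq] at h
    omega
  rw [Set.ncard_union_eq hdisj ((Oset_finite (n+2)).image _) ((Oset_finite (n+1)).image _)]
  congr 1
  · exact Set.ncard_image_of_injective _ (List.cons_injective)
  · apply Set.ncard_image_of_injOn
    rintro t ⟨ht1, ht2⟩ t' ⟨ht1', ht2'⟩ h
    cases t with
    | nil => simp at ht2
    | cons x s =>
      cases t' with
      | nil => simp at ht2'
      | cons x' s' =>
        simp only [List.headI, List.tail, List.cons.injEq] at h ⊢
        exact ⟨by omega, h.2⟩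

private lemma Oset_fib : ∀ n : ℕ,
    (Oset (n+1)).ncard = Nat.fib (n+1) ∧ (Oset (n+2)).ncard = Nat.fib (n+2) := by
  intro n
  induction n with
  | zero =>
    constructor
    · rw [Oset_one, Set.ncard_singleton]; rfl
    · rw [Oset_two, Set.ncard_singleton]; rfl
  | succ k ih =>
    refine ⟨ih.2, ?_⟩
    rw [Oset_ncard_rec, ih.1, ih.2, Nat.fib_add_two (n := k + 1),
      show k + 1 + 1 = k + 2 by omega]
    omega

private lemma Sset_rec (n : ℕ) :
    Sset (n+2) = (fun l => ((0 : ℕ), l)) '' Oset (n+2) ∪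
      (fun p : ℕ × List ℕ => (p.1 + 2, p.2)) '' Sset n := by
  ext ⟨e, l⟩
  simp only [Sset, Oset, Set.mem_setOf_eq, Set.mem_union, Set.mem_image, Prod.mk.injEq]
  constructor
  · rintro ⟨he, hl, hsum⟩
    rcases Nat.eq_zero_or_pos e with rfl | hpos
    · exact Or.inl ⟨l, ⟨hl, by omega⟩, rfl, rfl⟩
    · right
      have h2 : 2 ≤ e := by rcases he with ⟨k, rfl⟩; omega
      refine ⟨(e - 2, l), ⟨?_, hl, by simp; omega⟩, by simp; omega, rfl⟩
      rcases he with ⟨k, rfl⟩; exact ⟨k - 1, by omega⟩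
  · rintro (⟨t, ⟨ht1, ht2⟩, rfl, rfl⟩ | ⟨⟨e', t⟩, ⟨he', ht, hsum⟩, rfl, rfl⟩)
    · exact ⟨Even.zero, ht1, by omega⟩
    · refine ⟨?_, ht, by simp at hsum ⊢; omega⟩
      rcases he' with ⟨k, hk⟩
      exact ⟨k + 1, by simp at hk ⊢; omega⟩

private lemma Sset_ncard_rec (n : ℕ) :
    (Sset (n+2)).ncard = (Oset (n+2)).ncard + (Sset n).ncard := by
  rw [Sset_rec]
  have hdisj : Disjoint ((fun l => ((0 : ℕ), l)) '' Oset (n+2))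
      ((fun p : ℕ × List ℕ => (p.1 + 2, p.2)) '' Sset n) := by
    rw [Set.disjoint_left]
    rintro p ⟨t, _, rfl⟩ ⟨q, _, h⟩
    simp only [Prod.mk.injEq] at h
    omega
  rw [Set.ncard_union_eq hdisj ((Oset_finite (n+2)).image _) ((Sset_finite n).image _)]
  congr 1
  · exact Set.ncard_image_of_injective _ (fun a b h => by simpa using h)
  · exact Set.ncard_image_of_injective _ (fun a b h => by
      simp only [Prod.mk.injEq] at h
      exact Prod.ext (by omega) h.2)

private lemma Sset_zero : Sset 0 = {((0 : ℕ), ([] : List ℕ))} := by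
  ext ⟨e, l⟩
  simp only [Sset, Set.mem_setOf_eq, Set.mem_singleton_iff, Prod.mk.injEq]
  constructor
  · rintro ⟨he, hl, hsum⟩
    simp at hsum
    have he0 : e = 0 := by omega
    subst he0
    have : l ∈ Oset 0 := ⟨hl, by omega⟩
    rw [Oset_zero] at this
    exact ⟨rfl, this⟩
  · rintro ⟨rfl, rfl⟩
    exact ⟨Even.zero, by simp, rfl⟩

private lemma Sset_one : Sset 1 = {((0 : ℕ), [1])} := by
  ext ⟨e, l⟩
  simp only [Sset, Set.mem_setOf_eq, Set.mem_singleton_iff, Prod.mk.injEq]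
  constructor
  · rintro ⟨he, hl, hsum⟩
    have he0 : e = 0 := by rcases he with ⟨k, rfl⟩; omega
    subst he0
    have : l ∈ Oset 1 := ⟨hl, by omega⟩
    rw [Oset_one] at this
    exact ⟨rfl, this⟩
  · rintro ⟨rfl, rfl⟩
    exact ⟨Even.zero, by simp, rfl⟩

private lemma Sset_fib : ∀ n : ℕ,
    (Sset n).ncard = Nat.fib (n+1) ∧ (Sset (n+1)).ncard = Nat.fib (n+2) := by
  intro n
  induction n with
  | zero =>
    constructor
    · rw [Sset_zero, Set.ncard_singleton]; rfl
    · rw [Sset_one, Set.ncard_singleton]; rfl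
  | succ k ih =>
    refine ⟨ih.2, ?_⟩
    rw [Sset_ncard_rec, (Oset_fib k).2, ih.1, Nat.fib_add_two (n := k + 1),
      show k + 1 + 1 = k + 2 by omega]
    omega

/-- The number of compositions `(i₀; i₁, …, i_p)` of `n` whose first part `i₀`
is even (possibly `0`) and whose remaining parts are odd positive integers
equals the Fibonacci number `F(n+1)` (with `F(1) = F(2) = 1`). -/
theorem stmt_8 (n : ℕ) :
    {p : ℕ × List ℕ | Even p.1 ∧ (∀ x ∈ p.2, Odd x) ∧ p.1 + p.2.sum = n}.ncard =
      Nat.fib (n + 1) := by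
  exact (Sset_fib n).1
end

section
/- Fix r ≥ 2. The generating function for the number of partitions of n having at most one part divisible by r is: Σ_{n≥0} |Pₙ^{(r)}| xⁿ = (1/(1−x^r)) · ∏_{i≥1, r∤i} 1/(1−x^i), as formal power series in ℚ[[x]]. -/
open PowerSeries
namespace Theorems100

noncomputable section

variable {α : Type*}

open Finset

open scoped Classical

/-- The partial product for the generating function for odd partitions.
TODO: As `m` tends to infinity, this converges (in the `X`-adic topology).

If `m` is sufficiently large, the `i`th coefficient gives the number of odd partitions of the
natural number `i`: proved in `oddGF_prop`.
It is stated for an arbitrary field `α`, though it usually suffices to use `ℚ` or `ℝ`.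
-/
def partialOddGF (m : ℕ) [Field α] :=
  ∏ i ∈ range m, (1 - (X : PowerSeries α) ^ (2 * i + 1))⁻¹

/-- The partial product for the generating function for distinct partitions.
TODO: As `m` tends to infinity, this converges (in the `X`-adic topology).

If `m` is sufficiently large, the `i`th coefficient gives the number of distinct partitions of the
natural number `i`: proved in `distinctGF_prop`.
It is stated for an arbitrary commutative semiring `α`, though it usually suffices to use `ℕ`, `ℚ`
or `ℝ`.
-/
def partialDistinctGF (m : ℕ) [CommSemiring α] :=
  ∏ i ∈ range m, (1 + (X : PowerSeries α) ^ (i + 1))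

open Finset.HasAntidiagonal

universe u
variable {ι : Type u}

/-- A convenience constructor for the power series whose coefficients indicate a subset. -/
def indicatorSeries (α : Type*) [Semiring α] (s : Set ℕ) : PowerSeries α :=
  PowerSeries.mk fun n => if n ∈ s then 1 else 0

theorem coeff_indicator (s : Set ℕ) [Semiring α] (n : ℕ) :
    coeff (R := α) n (indicatorSeries _ s) = if n ∈ s then 1 else 0 :=
  coeff_mk _ _

theorem coeff_indicator_pos (s : Set ℕ) [Semiring α] (n : ℕ) (h : n ∈ s) :
    coeff (R := α) n (indicatorSeries _ s) = 1 := by rw [coeff_indicator, if_pos h]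

theorem coeff_indicator_neg (s : Set ℕ) [Semiring α] (n : ℕ) (h : n ∉ s) :
    coeff (R := α) n (indicatorSeries _ s) = 0 := by rw [coeff_indicator, if_neg h]

theorem constantCoeff_indicator (s : Set ℕ) [Semiring α] :
    constantCoeff (R := α) (indicatorSeries _ s) = if 0 ∈ s then 1 else 0 :=
  rfl

theorem two_series (i : ℕ) [Semiring α] :
    1 + (X : PowerSeries α) ^ i.succ = indicatorSeries α {0, i.succ} := by
  ext n
  simp only [coeff_indicator, coeff_one, coeff_X_pow, Set.mem_insert_iff, Set.mem_singleton_iff,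
    map_add]
  cases' n with d
  · simp [(Nat.succ_ne_zero i).symm]
  · simp [Nat.succ_ne_zero d]

theorem num_series' [Field α] (i : ℕ) :
    (1 - (X : PowerSeries α) ^ (i + 1))⁻¹ = indicatorSeries α {k | i + 1 ∣ k} := by
  rw [PowerSeries.inv_eq_iff_mul_eq_one]
  · ext n
    cases n with
    | zero => simp [mul_sub, zero_pow, constantCoeff_indicator]
    | succ n =>
      simp only [coeff_one, if_false, mul_sub, mul_one, coeff_indicator,
        LinearMap.map_sub, reduceCtorEq]
      simp_rw [coeff_mul, coeff_X_pow, coeff_indicator, @boole_mul _ _ _ _]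
      erw [@sum_ite _ _ _ _ _ (fun _ => Classical.propDecidable _), sum_ite]
      simp_rw [@filter_filter _ _ _ _ _, sum_const_zero, add_zero, sum_const, nsmul_eq_mul, mul_one,
        sub_eq_iff_eq_add, zero_add]
      symm
      split_ifs with h
      · suffices #{a ∈ antidiagonal (n + 1) | i + 1 ∣ a.fst ∧ a.snd = i + 1} = 1 by
          simp only [Set.mem_setOf_eq]; convert congr_arg ((↑) : ℕ → α) this; norm_cast
        rw [card_eq_one]
        cases' h with p hp
        refine ⟨((i + 1) * (p - 1), i + 1), ?_⟩
        ext ⟨a₁, a₂⟩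
        simp only [mem_filter, Prod.mk.injEq, HasAntidiagonal.mem_antidiagonal, mem_singleton]
        constructor
        · rintro ⟨a_left, ⟨a, rfl⟩, rfl⟩
          refine ⟨?_, rfl⟩
          rw [Nat.mul_sub_left_distrib, ← hp, ← a_left, mul_one, Nat.add_sub_cancel]
        · rintro ⟨rfl, rfl⟩
          match p with
          | 0 => rw [mul_zero] at hp; cases hp
          | p + 1 => rw [hp]; simp [mul_add]
      · suffices #{a ∈ antidiagonal (n + 1) | i + 1 ∣ a.fst ∧ a.snd = i + 1} = 0 by
          simp only [Set.mem_setOf_eq]; convert congr_arg ((↑) : ℕ → α) this; norm_cast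
        rw [card_eq_zero]
        apply eq_empty_of_forall_notMem
        simp only [Prod.forall, mem_filter, not_and, HasAntidiagonal.mem_antidiagonal]
        rintro _ h₁ h₂ ⟨a, rfl⟩ rfl
        apply h
        simp [← h₂]
  · simp [zero_pow]

def mkOdd : ℕ ↪ ℕ :=
  ⟨fun i => 2 * i + 1, fun x y h => by linarith⟩

-- The main workhorse of the partition theorem proof.
theorem partialGF_prop (α : Type*) [CommSemiring α] (n : ℕ) (s : Finset ℕ) (hs : ∀ i ∈ s, 0 < i)
    (c : ℕ → Set ℕ) (hc : ∀ i, i ∉ s → 0 ∈ c i) :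
    #{p : n.Partition | (∀ j, p.parts.count j ∈ c j) ∧ ∀ j ∈ p.parts, j ∈ s} =
      coeff (R := α) n (∏ i ∈ s, indicatorSeries α ((· * i) '' c i)) := by
  simp_rw [coeff_prod, coeff_indicator, prod_boole, sum_boole]
  apply congr_arg
  simp only [mem_univ, forall_true_left, not_and, not_forall, exists_prop,
    Set.mem_image, not_exists]
  set φ : (a : Nat.Partition n) →
    a ∈ filter (fun p ↦ (∀ (j : ℕ), Multiset.count j p.parts ∈ c j) ∧ ∀ j ∈ p.parts, j ∈ s) univ →
    ℕ →₀ ℕ := fun p _ => {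
      toFun := fun i => Multiset.count i p.parts • i
      support := Finset.filter (fun i => i ≠ 0) p.parts.toFinset
      mem_support_toFun := fun a => by
        simp only [smul_eq_mul, ne_eq, mul_eq_zero, Multiset.count_eq_zero]
        rw [not_or, not_not]
        simp only [Multiset.mem_toFinset, not_not, mem_filter] }
  refine Finset.card_bij φ ?_ ?_ ?_
  · intro a ha
    simp only [φ, not_forall, not_exists, not_and, exists_prop, mem_filter]
    rw [mem_finsuppAntidiag]
    dsimp only [ne_eq, smul_eq_mul, id_eq, eq_mpr_eq_cast, le_eq_subset, Finsupp.coe_mk]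
    simp only [mem_univ, forall_true_left, not_and, not_forall, exists_prop,
      mem_filter, true_and] at ha
    refine ⟨⟨?_, fun i ↦ ?_⟩, fun i _ ↦ ⟨a.parts.count i, ha.1 i, rfl⟩⟩
    · conv_rhs => simp [← a.parts_sum]
      rw [sum_multiset_count_of_subset _ s]
      · simp only [smul_eq_mul]
      · intro i
        simp only [Multiset.mem_toFinset, not_not, mem_filter]
        apply ha.2
    · simp only [ne_eq, Multiset.mem_toFinset, not_not, mem_filter, and_imp]
      exact fun hi _ ↦ ha.2 i hi
  · intro p₁ hp₁ p₂ hp₂ h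
    apply Nat.Partition.ext
    simp only [true_and, mem_univ, mem_filter] at hp₁ hp₂
    ext i
    simp only [φ, ne_eq, Multiset.mem_toFinset, not_not, smul_eq_mul, Finsupp.mk.injEq] at h
    by_cases hi : i = 0
    · rw [hi]
      rw [Multiset.count_eq_zero_of_notMem]
      · rw [Multiset.count_eq_zero_of_notMem]
        intro a; exact Nat.lt_irrefl 0 (hs 0 (hp₂.2 0 a))
      intro a; exact Nat.lt_irrefl 0 (hs 0 (hp₁.2 0 a))
    · rw [← mul_left_inj' hi]
      rw [funext_iff] at h
      exact h.2 i
  · simp only [φ, mem_filter, mem_finsuppAntidiag, mem_univ, exists_prop, true_and, and_assoc]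
    rintro f ⟨hf, hf₃, hf₄⟩
    have hf' : f ∈ finsuppAntidiag s n := mem_finsuppAntidiag.mpr ⟨hf, hf₃⟩
    simp only [mem_finsuppAntidiag] at hf'
    refine ⟨⟨∑ i ∈ s, Multiset.replicate (f i / i) i, ?_, ?_⟩, ?_, ?_, ?_⟩
    · intro i hi
      simp only [exists_prop, Multiset.mem_sum, mem_map, Function.Embedding.coeFn_mk] at hi
      rcases hi with ⟨t, ht, z⟩
      apply hs
      rwa [Multiset.eq_of_mem_replicate z]
    · simp_rw [Multiset.sum_sum, Multiset.sum_replicate, Nat.nsmul_eq_mul]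
      rw [← hf'.1]
      refine sum_congr rfl fun i hi => Nat.div_mul_cancel ?_
      rcases hf₄ i hi with ⟨w, _, hw₂⟩
      rw [← hw₂]
      exact dvd_mul_left _ _
    · intro i
      simp_rw [Multiset.count_sum', Multiset.count_replicate, sum_ite_eq']
      split_ifs with h
      · rcases hf₄ i h with ⟨w, hw₁, hw₂⟩
        rwa [← hw₂, Nat.mul_div_cancel _ (hs i h)]
      · exact hc _ h
    · intro i hi
      rw [Multiset.mem_sum] at hi
      rcases hi with ⟨j, hj₁, hj₂⟩
      rwa [Multiset.eq_of_mem_replicate hj₂]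
    · ext i
      simp_rw [Multiset.count_sum', Multiset.count_replicate, sum_ite_eq']
      simp only [ne_eq, Multiset.mem_toFinset, not_not, smul_eq_mul, ite_mul,
        zero_mul, Finsupp.coe_mk]
      split_ifs with h
      · apply Nat.div_mul_cancel
        rcases hf₄ i h with ⟨w, _, hw₂⟩
        apply Dvd.intro_left _ hw₂
      · apply symm
        rw [← Finsupp.notMem_support_iff]
        exact notMem_mono hf'.2 h

open Finset in
theorem gf_noPart (r N n : ℕ) (hn : n ≤ N) :
    (#{p : n.Partition | ∀ j ∈ p.parts, ¬ r ∣ j} : ℚ) =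
      coeff (R := ℚ) n (∏ i ∈ (Finset.range (N + 1)).filter (fun i => ¬ r ∣ i),
        (1 - (PowerSeries.X : PowerSeries ℚ) ^ i)⁻¹) := by
  set s : Finset ℕ := (Finset.range (N + 1)).filter (fun i => ¬ r ∣ i) with hs_def
  have hs : ∀ i ∈ s, 0 < i := by
    intro i hi
    simp only [hs_def, mem_filter, mem_range] at hi
    rcases Nat.eq_zero_or_pos i with h | h
    · exact absurd (h ▸ dvd_zero r) hi.2
    · exact h
  have hfac : ∀ i ∈ s, (1 - (X : PowerSeries ℚ) ^ i)⁻¹ =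
      indicatorSeries ℚ ((· * i) '' Set.univ) := by
    intro i hi
    obtain ⟨j, rfl⟩ := Nat.exists_eq_add_of_lt (hs i hi)
    have himg : ((· * (j + 1)) '' Set.univ) = {k | j + 1 ∣ k} := by
      ext k
      simp only [Set.image_univ, Set.mem_range, Set.mem_setOf_eq]
      constructor
      · rintro ⟨c, rfl⟩; exact Dvd.intro_left c rfl
      · rintro ⟨c, rfl⟩; exact ⟨c, mul_comm _ _⟩
    rw [zero_add, num_series', himg]
  rw [Finset.prod_congr rfl hfac,
    ← partialGF_prop ℚ n s hs (fun _ => Set.univ) (fun _ _ => trivial)]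
  norm_cast
  congr 1
  apply Finset.filter_congr
  intro p _
  simp only [Set.mem_univ, forall_const, true_and]
  apply forall₂_congr
  intro j hj
  have hjn : j ≤ n := by
    simpa [p.parts_sum] using Multiset.single_le_sum (fun _ _ => Nat.zero_le _) _ hj
  simp only [hs_def, mem_filter, mem_range]
  constructor
  · intro h; exact ⟨Nat.lt_succ_of_le (hjn.trans hn), h⟩
  · exact fun h => h.2

theorem coeff_inv_r (r m : ℕ) (hr : 2 ≤ r) :
    coeff (R := ℚ) m (1 - (X : PowerSeries ℚ) ^ r)⁻¹ = if r ∣ m then 1 else 0 := by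
  have h := num_series' (α := ℚ) (r - 1)
  rw [Nat.sub_add_cancel (by omega : 1 ≤ r)] at h
  rw [h, coeff_indicator]
  split_ifs with h0 h1 h2 <;> first | rfl | exact absurd h0 h1 | exact absurd h2 h0

lemma filter_div_eq (r a : ℕ) (m : Multiset ℕ) (hpos : ∀ x ∈ m, 0 < x)
    (hc : Multiset.card (m.filter (fun i => r ∣ i)) ≤ 1)
    (hsum : (m.filter (fun i => r ∣ i)).sum = a) :
    m.filter (fun i => r ∣ i) = if a = 0 then 0 else {a} := by
  interval_cases h : Multiset.card (m.filter (fun i => r ∣ i))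
  · rw [Multiset.card_eq_zero] at h
    rw [h] at hsum ⊢
    simp at hsum
    simp [← hsum]
  · rw [Multiset.card_eq_one] at h
    obtain ⟨x, hx⟩ := h
    have hxm : x ∈ m := Multiset.mem_of_mem_filter (hx ▸ Multiset.mem_singleton_self x)
    rw [hx] at hsum ⊢
    simp only [Multiset.sum_singleton] at hsum
    rw [if_neg]
    · rw [hsum]
    · have := hpos x hxm; omega

/-- The number of partitions of `m` with no part divisible by `r`. -/
def noDivCard (r m : ℕ) : ℕ := #{p : m.Partition | ∀ j ∈ p.parts, ¬ r ∣ j}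

open Finset in
theorem peak_sum (r n : ℕ) (hr : 2 ≤ r) :
    Nat.card {p : Nat.Partition n // Multiset.card (p.parts.filter (fun i => r ∣ i)) ≤ 1} =
      ∑ ab ∈ (Finset.HasAntidiagonal.antidiagonal n).filter (fun ab => r ∣ ab.1), noDivCard r ab.2 := by
  rw [Nat.card_eq_fintype_card, Fintype.card_subtype]
  rw [Finset.card_eq_sum_card_fiberwise
    (f := fun p : Nat.Partition n =>
      ((p.parts.filter (fun i => r ∣ i)).sum, n - (p.parts.filter (fun i => r ∣ i)).sum))
    (t := (Finset.HasAntidiagonal.antidiagonal n).filter (fun ab => r ∣ ab.1))]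
  · apply Finset.sum_congr rfl
    rintro ⟨a, b⟩ hab
    simp only [mem_filter, Finset.HasAntidiagonal.mem_antidiagonal] at hab
    obtain ⟨hsum, hdvd⟩ := hab
    have key : ∀ p : Nat.Partition n,
        Multiset.card (p.parts.filter (fun i => r ∣ i)) ≤ 1 →
        (p.parts.filter (fun i => r ∣ i)).sum = a →
        p.parts.filter (fun i => r ∣ i) = if a = 0 then 0 else {a} :=
      fun p h1 h2 => filter_div_eq r a p.parts (fun _ hx => p.parts_pos hx) h1 h2
    refine Finset.card_bij'
      (fun p hp => (⟨p.parts.filter (fun i => ¬ r ∣ i), ?_, ?_⟩ : Nat.Partition b))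
      (fun q hq => (⟨(if a = 0 then 0 else {a}) + q.parts, ?_, ?_⟩ : Nat.Partition n))
      ?_ ?_ ?_ ?_
    · intro i hi
      exact Nat.Partition.parts_pos _ (Multiset.mem_of_mem_filter hi)
    · simp only [mem_filter, Finset.mem_univ, true_and, Prod.mk.injEq] at hp
      obtain ⟨h1, h2, h3⟩ := hp
      have := congrArg Multiset.sum (Multiset.filter_add_not (fun i => r ∣ i) p.parts)
      rw [Multiset.sum_add, p.parts_sum] at this
      omega
    · intro x hx
      rw [Multiset.mem_add] at hx
      rcases hx with hx | hx
      · split_ifs at hx with h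
        · simp at hx
        · rw [Multiset.mem_singleton] at hx
          omega
      · exact q.parts_pos hx
    · rw [Multiset.sum_add, q.parts_sum]
      split_ifs with h
      · simp; omega
      · rw [Multiset.sum_singleton]; omega
    · intro p hp
      simp only [mem_filter, Finset.mem_univ, true_and] at hp ⊢
      intro j hj
      exact Multiset.of_mem_filter (p := fun i => ¬ r ∣ i) hj
    · intro q hq
      simp only [mem_filter, Finset.mem_univ, true_and, Prod.mk.injEq] at hq ⊢
      have hq' : ∀ j ∈ q.parts, ¬ r ∣ j := hq
      have hfq : q.parts.filter (fun i => r ∣ i) = 0 :=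
        Multiset.filter_eq_nil.2 hq'
      have hfilt : ((if a = 0 then 0 else {a}) + q.parts).filter (fun i => r ∣ i)
          = (if a = 0 then 0 else {a}) := by
        rw [Multiset.filter_add, hfq, add_zero]
        split_ifs with h
        · simp
        · rw [Multiset.filter_singleton, if_pos hdvd]
      refine ⟨?_, ?_, ?_⟩
      · rw [hfilt]; split_ifs <;> simp
      · rw [hfilt]; split_ifs with h
        · simp [h]
        · simp
      · rw [hfilt]; split_ifs with h
        · simp; omega
        · rw [Multiset.sum_singleton]; omega
    · intro p hp
      simp only [mem_filter, Finset.mem_univ, true_and, Prod.mk.injEq] at hp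
      obtain ⟨h1, h2, h3⟩ := hp
      apply Nat.Partition.ext
      simp only
      rw [← key p h1 h2, Multiset.filter_add_not]
    · intro q hq
      simp only [mem_filter, Finset.mem_univ, true_and] at hq
      apply Nat.Partition.ext
      simp only
      rw [Multiset.filter_add]
      have h1 : (if a = 0 then (0:Multiset ℕ) else {a}).filter (fun i => ¬ r ∣ i) = 0 := by
        split_ifs with h
        · simp
        · rw [Multiset.filter_singleton, if_neg (by simpa using hdvd)]
          rfl
      rw [h1, zero_add, Multiset.filter_eq_self.2 hq]
  · intro p _
    simp only [Finset.mem_coe, mem_filter, Finset.HasAntidiagonal.mem_antidiagonal]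
    have hle : (p.parts.filter (fun i => r ∣ i)).sum ≤ n := by
      conv_rhs => rw [← p.parts_sum]
      conv_rhs => rw [← Multiset.filter_add_not (fun i => r ∣ i) p.parts]
      rw [Multiset.sum_add]
      exact Nat.le_add_right _ _
    refine ⟨by omega, Multiset.dvd_sum ?_⟩
    intro x hx
    exact (Multiset.of_mem_filter hx)

end
end Theorems100

open Theorems100

/-- The number of partitions of `n` having at most one part divisible by `r`. -/
noncomputable def numPeakPartitions (r n : ℕ) : ℕ :=
  Nat.card {p : Nat.Partition n // Multiset.card (p.parts.filter (fun i => r ∣ i)) ≤ 1}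

/-- For `r ≥ 2`, `∑_{n≥0} |Pₙ^{(r)}| xⁿ = (1/(1-x^r)) ∏_{i≥1, r∤i} 1/(1-x^i)`
in `ℚ[[x]]`; the infinite product is understood coefficientwise: in each degree
`n` it agrees with any partial product over `i ≤ N` with `N ≥ n` (factors with
`i > n` do not affect the coefficient of `xⁿ`). -/
theorem stmt_10 (r : ℕ) (hr : 2 ≤ r) :
    ∀ n N : ℕ, n ≤ N →
      PowerSeries.coeff (R := ℚ) n (PowerSeries.mk fun m => (numPeakPartitions r m : ℚ)) =
        PowerSeries.coeff (R := ℚ) n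
          ((1 - (PowerSeries.X : PowerSeries ℚ) ^ r)⁻¹ *
            ∏ i ∈ (Finset.range (N + 1)).filter (fun i => ¬ r ∣ i),
              (1 - (PowerSeries.X : PowerSeries ℚ) ^ i)⁻¹) := by
  intro n N hnN
  rw [coeff_mk, coeff_mul]
  have h1 : (numPeakPartitions r n : ℚ) =
      ∑ ab ∈ (Finset.HasAntidiagonal.antidiagonal n).filter (fun ab => r ∣ ab.1),
        (noDivCard r ab.2 : ℚ) := by
    rw [numPeakPartitions, peak_sum r n hr]
    push_cast
    rfl
  rw [h1, Finset.sum_filter]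
  apply Finset.sum_congr rfl
  rintro ⟨a, b⟩ hab
  rw [Finset.HasAntidiagonal.mem_antidiagonal] at hab
  have hbN : b ≤ N := by omega
  rw [coeff_inv_r r a hr, ← gf_noPart r N b hbN]
  rw [noDivCard]
  split_ifs <;> simp
end

section
/- Let A = ⊕ₙ Aₙ be a graded connected associative ℚ-algebra, completed along the grading, and let σ = 1 + (higher degree terms) with homogeneous components σₙ ∈ Aₙ. Fix r ≥ 2. Then there exists a unique family of elements ζₙ^{(r)} ∈ Aₙ (n ≥ 1) such that σ = (Σ_{p≥0} ζ_{pr}^{(r)}) · ∏^{←}_{i≥1, r∤i} exp(ζ_i^{(r)}), where ζ₀^{(r)} := 1. Moreover ζₙ^{(r)} = ζₙ (the ordinary Zassenhaus elements of the factorization σ = ∏^{←}_{k≥1} exp(ζ_k)) for all n < 2r. -/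
set_option linter.unusedVariables false
set_option linter.unusedSectionVars false


/-- Partial ordered product `∏^{←}_{1 ≤ i ≤ N, r ∤ i} exp(ζ_i tⁱ)`
(larger indices on the left; indices divisible by `r` are skipped). -/
noncomputable def skipDown {R : Type*} [Ring R] [Algebra ℚ R] (r : ℕ) (ζ : ℕ → R)
    (N : ℕ) : PowerSeries R :=
  (((List.range N).reverse).map
    (fun k => if r ∣ (k + 1) then 1 else expPow (k + 1) (ζ (k + 1)))).prod

/-- The series `T = 1 + ∑_{p ≥ 1} ζ_{rp} t^{rp}`. -/
noncomputable def Tser {R : Type*} [Ring R] (r : ℕ) (ζ : ℕ → R) : PowerSeries R :=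
  PowerSeries.mk fun m => if m = 0 then 1 else if r ∣ m then ζ m else 0

/-- `z` is the level-`r` Zassenhaus family of `σ`:
`σ = (∑ₚ ζ^{(r)}_{pr}) ∏^{←}_{r∤i} exp(ζ^{(r)}_i)`, coefficientwise. -/
def IsLevelRZass {R : Type*} [Ring R] [Algebra ℚ R] (r : ℕ) (σ : PowerSeries R)
    (z : ℕ → R) : Prop :=
  z 0 = 0 ∧ ∀ n N : ℕ, n ≤ N →
    PowerSeries.coeff n (Tser r z * skipDown r z N) = PowerSeries.coeff n σ

/-- `w` is the ordinary Zassenhaus family of `σ`: `σ = ⋯ exp(ζ₂) exp(ζ₁)`. -/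
def IsOrdZass {R : Type*} [Ring R] [Algebra ℚ R] (σ : PowerSeries R)
    (w : ℕ → R) : Prop :=
  w 0 = 0 ∧ ∀ n N : ℕ, n ≤ N →
    PowerSeries.coeff n (zassDown w N) = PowerSeries.coeff n σ

namespace ZassAux

open PowerSeries

variable {R : Type*} [Ring R] [Algebra ℚ R]

lemma coeff_mul_range (A B : PowerSeries R) (n : ℕ) :
    coeff n (A * B)
      = ∑ a ∈ Finset.range (n + 1), coeff a A * coeff (n - a) B := by
  rw [PowerSeries.coeff_mul, Finset.Nat.sum_antidiagonal_eq_sum_range_succ_mk]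

lemma cml {A A' B : PowerSeries R} {n : ℕ}
    (h : ∀ a ≤ n, coeff a A = coeff a A') :
    coeff n (A * B) = coeff n (A' * B) := by
  rw [coeff_mul_range, coeff_mul_range]
  exact Finset.sum_congr rfl fun a ha => by
    rw [h a (Nat.lt_succ_iff.mp (Finset.mem_range.mp ha))]

lemma cmr {A B B' : PowerSeries R} {n : ℕ}
    (h : ∀ b ≤ n, coeff b B = coeff b B') :
    coeff n (A * B) = coeff n (A * B') := by
  rw [coeff_mul_range, coeff_mul_range]
  exact Finset.sum_congr rfl fun a _ => by rw [h (n - a) (Nat.sub_le _ _)]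

lemma coeff_mul_split_left {A A' B : PowerSeries R} {n : ℕ}
    (h : ∀ a < n, coeff a A = coeff a A') :
    coeff n (A * B) = coeff n (A' * B)
      + (coeff n A - coeff n A') * constantCoeff B := by
  rw [coeff_mul_range, coeff_mul_range, Finset.sum_range_succ, Finset.sum_range_succ]
  rw [Finset.sum_congr rfl fun a ha => by
    rw [h a (Finset.mem_range.mp ha)]]
  rw [Nat.sub_self, coeff_zero_eq_constantCoeff, sub_mul]
  abel

lemma coeff_mul_split_right {A B B' : PowerSeries R} {n : ℕ}
    (h : ∀ b < n, coeff b B = coeff b B') :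
    coeff n (A * B) = coeff n (A * B')
      + constantCoeff A * (coeff n B - coeff n B') := by
  rw [coeff_mul_range, coeff_mul_range, Finset.sum_range_succ', Finset.sum_range_succ']
  rw [Finset.sum_congr rfl fun a ha => by
    rw [h (n - (a + 1)) (by have := Finset.mem_range.mp ha; omega)]]
  rw [Nat.sub_zero, coeff_zero_eq_constantCoeff, mul_sub]
  abel

lemma coeff_expPow (k : ℕ) (c : R) (m : ℕ) :
    coeff m (expPow k c)
      = if k ∣ m then (algebraMap ℚ R (((m / k).factorial : ℚ)⁻¹)) * c ^ (m / k) else 0 := by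
  simp [expPow, PowerSeries.coeff_mk]

lemma coeff_expPow_eq {j : ℕ} (c : R) {a : ℕ} (ha : a < 2 * j) :
    coeff a (expPow j c) = coeff a (1 + PowerSeries.monomial j c) := by
  have hj : 0 < j := by omega
  rw [coeff_expPow, map_add, PowerSeries.coeff_one, PowerSeries.coeff_monomial]
  by_cases h : j ∣ a
  · obtain ⟨q, rfl⟩ := h
    have hq : q < 2 := by
      by_contra hq
      push_neg at hq
      have := Nat.mul_le_mul_left j hq
      omega
    interval_cases q
    · simp [hj.ne', hj.ne]
    · simp [hj.ne', Nat.div_self hj]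
  · have h0 : a ≠ 0 := fun h0 => h (h0 ▸ dvd_zero j)
    have h1 : a ≠ j := fun h1 => h (h1 ▸ dvd_refl j)
    simp [h, h0, h1]

lemma coeff_one_add_monomial_mul (j : ℕ) (c : R) (P : PowerSeries R) (n : ℕ) :
    coeff n ((1 + PowerSeries.monomial j c) * P)
      = coeff n P + if j ≤ n then c * coeff (n - j) P else 0 := by
  rw [add_mul, one_mul, map_add]
  congr 1
  rw [coeff_mul_range]
  simp only [PowerSeries.coeff_monomial, ite_mul, zero_mul]
  rw [Finset.sum_ite_eq' (Finset.range (n + 1)) j (fun a => c * coeff (n - a) P)]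
  simp [Nat.lt_succ_iff]

lemma coeff_expPow_mul {j : ℕ} (c : R) (P : PowerSeries R) {n : ℕ} (hn : n < 2 * j) :
    coeff n (expPow j c * P)
      = coeff n P + if j ≤ n then c * coeff (n - j) P else 0 := by
  rw [cml (fun a ha => coeff_expPow_eq c (lt_of_le_of_lt ha hn)),
    coeff_one_add_monomial_mul]

lemma skipDown_succ (r : ℕ) (ζ : ℕ → R) (N : ℕ) :
    skipDown r ζ (N + 1)
      = (if r ∣ (N + 1) then 1 else expPow (N + 1) (ζ (N + 1))) * skipDown r ζ N := by
  simp [skipDown, List.range_succ]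

lemma zassDown_succ (ζ : ℕ → R) (N : ℕ) :
    zassDown ζ (N + 1) = expPow (N + 1) (ζ (N + 1)) * zassDown ζ N := by
  simp [zassDown, List.range_succ]

lemma skipDown_zero (r : ℕ) (ζ : ℕ → R) : skipDown r ζ 0 = 1 := by simp [skipDown]

lemma zassDown_zero (ζ : ℕ → R) : zassDown ζ 0 = 1 := by simp [zassDown]

lemma constantCoeff_expPow (k : ℕ) (c : R) :
    constantCoeff (expPow k c) = 1 := by
  rw [← coeff_zero_eq_constantCoeff, coeff_expPow]
  simp

lemma constantCoeff_skipDown (r : ℕ) (ζ : ℕ → R) (N : ℕ) :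
    constantCoeff (skipDown r ζ N) = 1 := by
  induction N with
  | zero => simp [skipDown_zero]
  | succ N ih =>
    rw [skipDown_succ, map_mul, ih, mul_one]
    split_ifs
    · simp
    · exact constantCoeff_expPow _ _

lemma constantCoeff_zassDown (ζ : ℕ → R) (N : ℕ) :
    constantCoeff (zassDown ζ N) = 1 := by
  induction N with
  | zero => simp [zassDown_zero]
  | succ N ih => rw [zassDown_succ, map_mul, ih, mul_one, constantCoeff_expPow]

lemma skipDown_congr {r : ℕ} {ζ ζ' : ℕ → R} {N : ℕ}
    (h : ∀ i, 1 ≤ i → i ≤ N → ζ i = ζ' i) :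
    skipDown r ζ N = skipDown r ζ' N := by
  induction N with
  | zero => rw [skipDown_zero, skipDown_zero]
  | succ N ih =>
    rw [skipDown_succ, skipDown_succ, h (N + 1) (by omega) le_rfl,
      ih fun i h1 h2 => h i h1 (by omega)]

lemma zassDown_congr {ζ ζ' : ℕ → R} {N : ℕ}
    (h : ∀ i, 1 ≤ i → i ≤ N → ζ i = ζ' i) :
    zassDown ζ N = zassDown ζ' N := by
  induction N with
  | zero => rw [zassDown_zero, zassDown_zero]
  | succ N ih =>
    rw [zassDown_succ, zassDown_succ, h (N + 1) (by omega) le_rfl,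
      ih fun i h1 h2 => h i h1 (by omega)]

lemma skipDown_eq_zassDown {r : ℕ} (ζ : ℕ → R) {N : ℕ} (h : N < r) :
    skipDown r ζ N = zassDown ζ N := by
  induction N with
  | zero => rw [skipDown_zero, zassDown_zero]
  | succ N ih =>
    have hnd : ¬ r ∣ (N + 1) := fun hd => by
      have := Nat.le_of_dvd (by omega) hd
      omega
    rw [skipDown_succ, if_neg hnd, zassDown_succ, ih (by omega)]

lemma not_dvd_of_lt_two_mul {r m : ℕ} (h1 : r < m) (h2 : m < 2 * r) : ¬ r ∣ m := by
  rintro ⟨q, rfl⟩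
  rcases q with _ | _ | q
  · omega
  · omega
  · have : r * (q + 1 + 1) = r * q + r * 2 := by ring
    omega

lemma coeff_Tser (r : ℕ) (ζ : ℕ → R) (m : ℕ) :
    coeff m (Tser r ζ) = if m = 0 then 1 else if r ∣ m then ζ m else 0 := by
  simp [Tser, PowerSeries.coeff_mk]

lemma constantCoeff_Tser (r : ℕ) (ζ : ℕ → R) : constantCoeff (Tser r ζ) = 1 := by
  rw [← coeff_zero_eq_constantCoeff, coeff_Tser]
  simp

lemma coeff_Tser_eq {r : ℕ} (hr : 1 ≤ r) {ζ : ℕ → R} {m : ℕ} (hm : m < 2 * r) :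
    coeff m (Tser r ζ) = coeff m (1 + PowerSeries.monomial r (ζ r)) := by
  rw [coeff_Tser, map_add, PowerSeries.coeff_one, PowerSeries.coeff_monomial]
  by_cases h0 : m = 0
  · subst h0
    rw [if_pos rfl, if_pos rfl, if_neg (by omega : ¬ (0 : ℕ) = r), add_zero]
  by_cases hm' : m = r
  · subst hm'
    simp [h0]
  · have hnd : ¬ r ∣ m := by
      rintro ⟨q, rfl⟩
      rcases q with _ | _ | q
      · omega
      · omega
      · have : r * (q + 1 + 1) = r * q + r * 2 := by ring
        omega
    simp [h0, hm', hnd]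

lemma coeff_Tser_mul {r : ℕ} (hr : 1 ≤ r) {ζ : ℕ → R} {m : ℕ} (hm : m < 2 * r)
    (P : PowerSeries R) :
    coeff m (Tser r ζ * P)
      = coeff m P + if r ≤ m then ζ r * coeff (m - r) P else 0 := by
  rw [cml (fun a ha => coeff_Tser_eq hr (lt_of_le_of_lt ha hm)),
    coeff_one_add_monomial_mul]

lemma coeff_mul_skipDown_stable {r : ℕ} (T : PowerSeries R) (ζ : ℕ → R) {n N : ℕ}
    (hnN : n ≤ N) :
    coeff n (T * skipDown r ζ N) = coeff n (T * skipDown r ζ n) := by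
  induction N, hnN using Nat.le_induction with
  | base => rfl
  | succ N hN ih =>
    rw [skipDown_succ, ← mul_assoc]
    rw [cml (A' := T) (fun a ha => by
      rw [cmr (B' := (1 : PowerSeries R)) (fun b hb => by
        split_ifs with h
        · rfl
        · rw [coeff_expPow_eq (ζ (N + 1)) (by omega : b < 2 * (N + 1)), map_add,
            PowerSeries.coeff_monomial, if_neg (by omega : ¬ b = N + 1), add_zero]), mul_one])]
    exact ih

lemma agree {r : ℕ} (hr : 2 ≤ r) (u : ℕ → R) :
    ∀ N, r ≤ N → N < 2 * r → ∀ m, m < 2 * r →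
      coeff m (Tser r u * skipDown r u N) = coeff m (zassDown u N) := by
  intro N
  induction N with
  | zero => omega
  | succ N ih =>
    intro hrN hN2 m hm
    by_cases hNr : N + 1 = r
    · rw [skipDown_succ, if_pos (hNr ▸ dvd_refl r), one_mul,
        skipDown_eq_zassDown u (by omega), zassDown_succ]
      rw [coeff_Tser_mul (by omega) hm, coeff_expPow_mul _ _ (by omega : m < 2 * (N + 1))]
      rw [hNr]
    · have hrN' : r ≤ N := by omega
      have hnd : ¬ r ∣ (N + 1) := not_dvd_of_lt_two_mul (by omega) hN2
      rw [skipDown_succ, if_neg hnd, zassDown_succ]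
      rw [coeff_Tser_mul (by omega) hm]
      rw [coeff_expPow_mul (u (N + 1)) _ (by omega : m < 2 * (N + 1))]
      rw [coeff_expPow_mul (u (N + 1)) _ (by omega : m < 2 * (N + 1))]
      rw [coeff_expPow_mul (u (N + 1)) _ (by omega : m - r < 2 * (N + 1))]
      rw [if_neg (by omega : ¬ (N + 1 ≤ m - r)), add_zero]
      have IHm := ih hrN' (by omega) m hm
      rw [coeff_Tser_mul (by omega) hm] at IHm
      by_cases hm1 : N + 1 ≤ m
      · have IHm' := ih hrN' (by omega) (m - (N + 1)) (by omega)
        rw [coeff_Tser_mul (by omega) (by omega : m - (N + 1) < 2 * r)] at IHm'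
        rw [if_neg (by omega : ¬ (r ≤ m - (N + 1))), add_zero] at IHm'
        rw [if_pos hm1, if_pos hm1, IHm', ← IHm]
        abel
      · rw [if_neg hm1, if_neg hm1, add_zero, add_zero]
        exact IHm

/-- truncation below `n` -/
def trunc' (n : ℕ) (z : ℕ → R) : ℕ → R := fun i => if i < n then z i else 0

lemma trunc'_agree {n : ℕ} (z : ℕ → R) : ∀ i, 1 ≤ i → i ≤ n - 1 → trunc' n z i = z i :=
  fun i _ h2 => if_pos (by omega)

lemma crux_level {r : ℕ} (hr : 2 ≤ r) {n : ℕ} (hn : 1 ≤ n) (z : ℕ → R) :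
    coeff n (Tser r z * skipDown r z n)
      = z n + coeff n (Tser r (trunc' n z) * skipDown r (trunc' n z) n) := by
  obtain ⟨n', rfl⟩ : ∃ n', n = n' + 1 := ⟨n - 1, by omega⟩
  have hagree : ∀ i, 1 ≤ i → i ≤ n' → trunc' (n' + 1) z i = z i :=
    fun i h1 h2 => if_pos (by omega)
  by_cases hd : r ∣ (n' + 1)
  · rw [skipDown_succ, if_pos hd, one_mul, skipDown_succ, if_pos hd, one_mul,
      skipDown_congr hagree]
    rw [coeff_mul_split_left (A' := Tser r (trunc' (n' + 1) z)) (fun a ha => by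
      rw [coeff_Tser, coeff_Tser]
      split_ifs with h1 h2
      · rfl
      · rw [trunc', if_pos (by omega)]
      · rfl)]
    rw [coeff_Tser, coeff_Tser, constantCoeff_skipDown,
      if_neg (by omega : ¬ n' + 1 = 0), if_neg (by omega : ¬ n' + 1 = 0),
      if_pos hd, if_pos hd]
    rw [show trunc' (n' + 1) z (n' + 1) = 0 from if_neg (by omega)]
    rw [sub_zero, mul_one]
    abel
  · rw [cml (A' := Tser r (trunc' (n' + 1) z)) (fun a ha => by
      rw [coeff_Tser, coeff_Tser]
      split_ifs with h1 h2
      · rfl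
      · rcases Nat.lt_or_ge a (n' + 1) with h | h
        · rw [trunc', if_pos h]
        · exact absurd (le_antisymm ha h ▸ h2) hd
      · rfl)]
    rw [skipDown_succ, if_neg hd, skipDown_succ, if_neg hd, skipDown_congr hagree]
    rw [coeff_mul_split_right
      (B' := expPow (n' + 1) (trunc' (n' + 1) z (n' + 1)) * skipDown r z n')
      (fun b hb => by
        rw [coeff_expPow_mul _ _ (by omega : b < 2 * (n' + 1)),
          coeff_expPow_mul _ _ (by omega : b < 2 * (n' + 1)),
          if_neg (by omega : ¬ n' + 1 ≤ b), if_neg (by omega : ¬ n' + 1 ≤ b)])]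
    rw [coeff_expPow_mul _ _ (by omega : n' + 1 < 2 * (n' + 1)),
      coeff_expPow_mul _ _ (by omega : n' + 1 < 2 * (n' + 1))]
    rw [if_pos le_rfl, if_pos le_rfl, Nat.sub_self, coeff_zero_eq_constantCoeff,
      constantCoeff_skipDown, constantCoeff_Tser, mul_one, mul_one]
    rw [show trunc' (n' + 1) z (n' + 1) = 0 from if_neg (by omega)]
    rw [one_mul]
    abel

lemma crux_ord {n : ℕ} (hn : 1 ≤ n) (w : ℕ → R) :
    coeff n (zassDown w n) = w n + coeff n (zassDown (trunc' n w) n) := by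
  obtain ⟨n', rfl⟩ : ∃ n', n = n' + 1 := ⟨n - 1, by omega⟩
  have hagree : ∀ i, 1 ≤ i → i ≤ n' → trunc' (n' + 1) w i = w i :=
    fun i h1 h2 => if_pos (by omega)
  rw [zassDown_succ, zassDown_succ, zassDown_congr hagree]
  rw [coeff_expPow_mul _ _ (by omega : n' + 1 < 2 * (n' + 1)),
    coeff_expPow_mul _ _ (by omega : n' + 1 < 2 * (n' + 1))]
  rw [if_pos le_rfl, if_pos le_rfl, Nat.sub_self, coeff_zero_eq_constantCoeff,
    constantCoeff_zassDown, mul_one, mul_one]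
  rw [show trunc' (n' + 1) w (n' + 1) = 0 from if_neg (by omega)]
  abel

lemma agree_final {r : ℕ} (hr : 2 ≤ r) {n : ℕ} (hn2 : n < 2 * r) (u : ℕ → R) :
    coeff n (Tser r u * skipDown r u n) = coeff n (zassDown u n) := by
  by_cases h : n < r
  · rw [skipDown_eq_zassDown u h, coeff_Tser_mul (by omega) hn2,
      if_neg (by omega : ¬ r ≤ n), add_zero]
  · exact agree hr u n (by omega) hn2 n hn2

noncomputable def zfun (R : Type*) [Ring R] [Algebra ℚ R] (r : ℕ)
    (σ : PowerSeries R) : ℕ → R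
  | 0 => 0
  | (n + 1) =>
    coeff (n + 1) σ -
      coeff (n + 1)
        (Tser r (fun i => if h : i < n + 1 then zfun R r σ i else 0) *
         skipDown r (fun i => if h : i < n + 1 then zfun R r σ i else 0) (n + 1))
  decreasing_by all_goals exact h

lemma zfun_zero (r : ℕ) (σ : PowerSeries R) : zfun R r σ 0 = 0 := by
  rw [zfun]

lemma zfun_succ (r : ℕ) (σ : PowerSeries R) (n : ℕ) :
    zfun R r σ (n + 1) = coeff (n + 1) σ -
      coeff (n + 1) (Tser r (trunc' (n + 1) (zfun R r σ)) *
        skipDown r (trunc' (n + 1) (zfun R r σ)) (n + 1)) := by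
  have h : trunc' (n + 1) (zfun R r σ)
      = fun i => if h : i < n + 1 then zfun R r σ i else 0 := by
    funext i
    simp [trunc']
  rw [h, zfun]

end ZassAux

open ZassAux

/-- For `σ = 1 + (higher terms)` and `r ≥ 2`, there is a unique family
`ζₙ^{(r)}` with `σ = (∑ₚ ζ^{(r)}_{pr}) ∏^{←}_{r∤i} exp(ζ_i^{(r)})`; moreover
`ζₙ^{(r)} = ζₙ` (the ordinary Zassenhaus elements) for all `n < 2r`. -/
theorem stmt_13 (R : Type*) [Ring R] [Algebra ℚ R] (r : ℕ) (hr : 2 ≤ r)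
    (σ : PowerSeries R) (hσ : PowerSeries.constantCoeff σ = 1) :
    (∃! z : ℕ → R, IsLevelRZass r σ z) ∧
    ∀ z w : ℕ → R, IsLevelRZass r σ z → IsOrdZass σ w →
      ∀ n : ℕ, 1 ≤ n → n < 2 * r → z n = w n := by
  have key_z : ∀ z : ℕ → R, IsLevelRZass r σ z → ∀ n : ℕ, 1 ≤ n →
      z n = PowerSeries.coeff n σ - PowerSeries.coeff n
        (Tser r (trunc' n z) * skipDown r (trunc' n z) n) := by
    intro z hz n hn
    have h := hz.2 n n le_rfl
    rw [crux_level hr hn] at h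
    exact eq_sub_of_add_eq h
  have huniq : ∀ z z' : ℕ → R, IsLevelRZass r σ z → IsLevelRZass r σ z' → z = z' := by
    intro z z' hz hz'
    funext n
    induction n using Nat.strong_induction_on with
    | _ n ih =>
      cases n with
      | zero => rw [hz.1, hz'.1]
      | succ m =>
        rw [key_z z hz (m + 1) (by omega), key_z z' hz' (m + 1) (by omega)]
        have h : trunc' (m + 1) z = trunc' (m + 1) z' := by
          funext i
          by_cases hi : i < m + 1
          · simp only [trunc', if_pos hi]
            exact ih i hi
          · simp only [trunc', if_neg hi]
        rw [h]
  have hex : IsLevelRZass r σ (zfun R r σ) := by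
    refine ⟨zfun_zero r σ, ?_⟩
    intro n N hnN
    rw [coeff_mul_skipDown_stable _ _ hnN]
    cases n with
    | zero =>
      rw [skipDown_zero, mul_one, coeff_Tser]
      simp [PowerSeries.coeff_zero_eq_constantCoeff, hσ]
    | succ m =>
      rw [crux_level hr (by omega), zfun_succ]
      abel
  refine ⟨⟨zfun R r σ, hex, fun z' h => huniq z' _ h hex⟩, ?_⟩
  intro z w hz hw
  have main : ∀ n : ℕ, n < 2 * r → z n = w n := by
    intro n
    induction n using Nat.strong_induction_on with
    | _ n ih =>
      intro hn2
      cases n with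
      | zero => rw [hz.1, hw.1]
      | succ m =>
        have hw' := hw.2 (m + 1) (m + 1) le_rfl
        rw [crux_ord (by omega) w] at hw'
        rw [key_z z hz (m + 1) (by omega), eq_sub_of_add_eq hw']
        have htr : trunc' (m + 1) z = trunc' (m + 1) w := by
          funext i
          by_cases hi : i < m + 1
          · simp only [trunc', if_pos hi]
            exact ih i hi (by omega)
          · simp only [trunc', if_neg hi]
        rw [htr, agree_final hr hn2]
  exact fun n _ hn2 => main n hn2
end

section
/- (Solomon) For each composition I of n, let D_I ∈ ℚ[Sₙ] be the sum of all permutations whose descent set equals Des(I) = {i₁, i₁+i₂, …, i₁+⋯+i_{r−1}}. Then the ℚ-span of {D_I : I ⊨ n} is a unital subalgebra of the group algebra ℚ[Sₙ], of dimension 2^{n−1}. -/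
/-- The descent set of a permutation of `{0, 1, …, n}` (so of `S_{n+1}`),
as a subset of `{0, …, n-1}` (descent positions). -/
def descentSet {n : ℕ} (σ : Equiv.Perm (Fin (n + 1))) : Finset (Fin n) :=
  Finset.univ.filter fun i => σ i.succ < σ i.castSucc

/-- `D S` is the sum, in the group algebra `ℚ[S_{n+1}]`, of all permutations
whose descent set is exactly `S`. -/
noncomputable def descentSum (n : ℕ) (S : Finset (Fin n)) :
    MonoidAlgebra ℚ (Equiv.Perm (Fin (n + 1))) :=
  ∑ σ ∈ Finset.univ.filter (fun σ : Equiv.Perm (Fin (n + 1)) => descentSet σ = S),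
    MonoidAlgebra.of ℚ (Equiv.Perm (Fin (n + 1))) σ

namespace Sol
open Finset
variable {n : ℕ}

/-! ### Block indices -/

/-- block index of position `i` w.r.t. break set `J`. -/
def bIdx (J : Finset (Fin n)) (i : Fin (n+1)) : ℕ :=
  (J.filter fun k : Fin n => k.val < i.val).card

lemma bIdx_mono {J : Finset (Fin n)} {x y : Fin (n+1)} (h : x ≤ y) :
    bIdx J x ≤ bIdx J y := by
  apply Finset.card_le_card
  intro k hk
  simp only [bIdx, mem_filter] at *
  exact ⟨hk.1, lt_of_lt_of_le hk.2 h⟩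

lemma lt_of_bIdx_lt {J : Finset (Fin n)} {x y : Fin (n+1)} (h : bIdx J x < bIdx J y) :
    x < y := by
  by_contra hc
  exact absurd (bIdx_mono (not_lt.mp hc)) (not_le.mpr h)

lemma bIdx_succ (J : Finset (Fin n)) (i : Fin n) :
    bIdx J i.succ = bIdx J i.castSucc + (if i ∈ J then 1 else 0) := by
  classical
  simp only [bIdx, Fin.val_succ, Fin.coe_castSucc]
  have hsplit : (J.filter fun k : Fin n => k.val < i.val + 1)
      = (J.filter fun k : Fin n => k.val < i.val) ∪ (J.filter fun k : Fin n => k = i) := by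
    ext k
    simp only [mem_filter, mem_union]
    constructor
    · rintro ⟨hk, hlt⟩
      rcases Nat.lt_succ_iff_lt_or_eq.mp hlt with h | h
      · exact Or.inl ⟨hk, h⟩
      · exact Or.inr ⟨hk, Fin.ext h⟩
    · rintro (⟨hk, hlt⟩ | ⟨hk, rfl⟩)
      · exact ⟨hk, Nat.lt_succ_of_lt hlt⟩
      · exact ⟨hk, Nat.lt_succ_self _⟩
  rw [hsplit, Finset.card_union_of_disjoint]
  · congr 1
    by_cases h : i ∈ J
    · simp [Finset.filter_eq', if_pos h, h]
    · simp [Finset.filter_eq', if_neg h, h]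
  · rw [Finset.disjoint_filter]
    rintro k _ hk rfl
    exact lt_irrefl _ hk

lemma chain_lt {α : Type} [Preorder α] (f : Fin (n+1) → α) :
    ∀ {y x : Fin (n+1)}, x < y →
    (∀ i : Fin n, x ≤ i.castSucc → i.succ ≤ y → f i.castSucc < f i.succ) →
    f x < f y := by
  intro y
  induction y using Fin.induction with
  | zero => intro x hx; exact absurd hx (Fin.not_lt_zero x)
  | succ i ih =>
    intro x hx h
    have hxc : x ≤ i.castSucc := by
      have h1 : x.val < i.val + 1 := by simpa [Fin.lt_def] using hx
      exact Fin.le_def.mpr (by simpa using Nat.lt_succ_iff.mp h1)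
    rcases eq_or_lt_of_le hxc with heq | hlt
    · rw [heq]; exact h i heq.le le_rfl
    · exact lt_trans
        (ih hlt fun j hj hj' => h j hj (hj'.trans (Fin.castSucc_lt_succ (i := i)).le))
        (h i hlt.le le_rfl)

lemma bIdx_eq_of_between {J : Finset (Fin n)} {x y z w : Fin (n+1)}
    (hxz : x ≤ z) (hzw : z ≤ w) (hwy : w ≤ y) (h : bIdx J x = bIdx J y) :
    bIdx J z = bIdx J w :=
  le_antisymm (bIdx_mono hzw)
    (le_trans (bIdx_mono hwy) (h ▸ bIdx_mono hxz : bIdx J y ≤ bIdx J z))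

/-! ### Increasing on blocks -/

/-- `f` is strictly increasing within each `J`-block. -/
def IncOn (J : Finset (Fin n)) (f : Fin (n+1) → Fin (n+1)) : Prop :=
  ∀ ⦃x y : Fin (n+1)⦄, x < y → bIdx J x = bIdx J y → f x < f y

lemma descentSet_subset_iff {J : Finset (Fin n)} {σ : Equiv.Perm (Fin (n+1))} :
    descentSet σ ⊆ J ↔ IncOn J σ := by
  constructor
  · intro hsub x y hxy hb
    refine chain_lt σ hxy fun i hxi hiy => ?_
    have hbb : bIdx J i.castSucc = bIdx J i.succ :=
      bIdx_eq_of_between hxi (Fin.castSucc_lt_succ (i := i) : _ < _).le hiy hb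
    have hnot : i ∉ J := by
      intro hiJ
      rw [bIdx_succ J i, if_pos hiJ] at hbb
      omega
    have hnd : i ∉ descentSet σ := fun hd => hnot (hsub hd)
    simp only [descentSet, mem_filter, mem_univ, true_and, not_lt] at hnd
    exact lt_of_le_of_ne hnd (by
      intro hc
      exact absurd (σ.injective hc) (Fin.ne_of_lt (Fin.castSucc_lt_succ (i := i))))
  · intro hinc i hi
    simp only [descentSet, mem_filter, mem_univ, true_and] at hi
    by_contra hiJ
    have : σ i.castSucc < σ i.succ := by
      apply hinc (Fin.castSucc_lt_succ (i := i))
      rw [bIdx_succ J i, if_neg hiJ, Nat.add_zero]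
    exact absurd hi (not_lt.mpr this.le)

lemma strictMono_eq_one {σ : Equiv.Perm (Fin (n+1))} (h : StrictMono σ) : σ = 1 := by
  have le_app : ∀ (f : Fin (n+1) → Fin (n+1)), StrictMono f → ∀ x, x ≤ f x := by
    intro f hf x
    induction x using Fin.induction with
    | zero => exact Fin.zero_le _
    | succ i ih =>
      have h1 : f i.castSucc < f i.succ := hf (Fin.castSucc_lt_succ (i := i))
      have h2 : i.castSucc < f i.succ := lt_of_le_of_lt ih h1
      rw [Fin.le_def, Fin.val_succ]
      rw [Fin.lt_def, Fin.coe_castSucc] at h2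
      omega
  have hinv : StrictMono (σ⁻¹ : Equiv.Perm (Fin (n+1))) := by
    intro a b hab
    rcases lt_trichotomy (σ⁻¹ a) (σ⁻¹ b) with h1 | h1 | h1
    · exact h1
    · exact absurd (congrArg σ h1) (by simp [ne_of_lt hab])
    · have := h h1
      simp at this
      exact absurd hab (not_lt.mpr this.le)
  ext x
  have h1 := le_app σ h x
  have h2 := le_app _ hinv (σ x)
  simp only [Equiv.Perm.inv_def, Equiv.symm_apply_apply] at h2
  have hx : σ x = x := le_antisymm h2 h1
  simp [hx]

/-- a block-preserving permutation, strictly increasing within blocks, is the identity -/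
lemma blockPerm_eq_one {J : Finset (Fin n)} {θ : Equiv.Perm (Fin (n+1))}
    (hb : ∀ i, bIdx J (θ i) = bIdx J i) (hmono : IncOn J θ) : θ = 1 := by
  apply strictMono_eq_one
  intro x y hxy
  rcases lt_or_eq_of_le (bIdx_mono hxy.le : bIdx J x ≤ bIdx J y) with hbb | hbb
  · apply lt_of_bIdx_lt (J := J)
    rw [hb x, hb y]; exact hbb
  · exact hmono hxy hbb

lemma descentSet_eq_empty {σ : Equiv.Perm (Fin (n+1))} (h : descentSet σ = ∅) : σ = 1 := by
  have hinc : IncOn ∅ ⇑σ := descentSet_subset_iff.mp (by rw [h])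
  apply strictMono_eq_one
  intro x y hxy
  exact hinc hxy (by simp [bIdx])

lemma descentSet_one : descentSet (1 : Equiv.Perm (Fin (n+1))) = ∅ := by
  ext i; simp only [descentSet, Finset.mem_filter, Finset.mem_univ, true_and, Equiv.Perm.one_apply, Finset.notMem_empty, iff_false]; exact fun h => lt_asymm (Fin.castSucc_lt_succ (i := i)) (Finset.mem_filter.mp h).2

/-! ### Blockwise sorting -/

/-- the key function for blockwise sorting of `g` w.r.t. `J`-blocks -/
def skey (J : Finset (Fin n)) (g : Fin (n+1) → Fin (n+1)) (i : Fin (n+1)) : ℕ :=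
  bIdx J i * (n+1) + (g i : ℕ)

/-- the permutation sorting `g` blockwise -/
noncomputable def sortPerm (J : Finset (Fin n)) (g : Fin (n+1) → Fin (n+1)) :
    Equiv.Perm (Fin (n+1)) :=
  Tuple.sort (skey J g)

lemma skey_div (J : Finset (Fin n)) (g : Fin (n+1) → Fin (n+1)) (j : Fin (n+1)) :
    skey J g j / (n+1) = bIdx J j := by
  rw [skey, mul_comm, Nat.mul_add_div (Nat.succ_pos n), Nat.div_eq_of_lt (g j).isLt,
    Nat.add_zero]

lemma sortPerm_bIdx (J : Finset (Fin n)) (g : Fin (n+1) → Fin (n+1)) (i : Fin (n+1)) :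
    bIdx J (sortPerm J g i) = bIdx J i := by
  have hmono : Monotone (skey J g ∘ sortPerm J g) := Tuple.monotone_sort _
  have h1 : Monotone (bIdx J ∘ ⇑(sortPerm J g)) := by
    intro a b hab
    simp only [Function.comp_apply, ← skey_div J g]
    exact Nat.div_le_div_right (hmono hab)
  have h2 : Monotone (bIdx J ∘ ⇑(1 : Equiv.Perm (Fin (n+1)))) := by
    intro a b hab
    simpa using bIdx_mono (J := J) hab
  have := Tuple.unique_monotone h1 h2
  have := congrFun this i
  simpa using this

lemma sortPerm_inc {J : Finset (Fin n)} {g : Fin (n+1) → Fin (n+1)}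
    (hg : Function.Injective g) : IncOn J (g ∘ sortPerm J g) := by
  intro x y hxy hb
  have hmono : Monotone (skey J g ∘ sortPerm J g) := Tuple.monotone_sort _
  have hk := hmono hxy.le
  simp only [Function.comp_apply, skey] at hk
  rw [sortPerm_bIdx, sortPerm_bIdx, hb] at hk
  have hle : (g (sortPerm J g x) : ℕ) ≤ (g (sortPerm J g y) : ℕ) := by omega
  have hne : g (sortPerm J g x) ≠ g (sortPerm J g y) := by
    intro hc
    exact absurd ((sortPerm J g).injective (hg hc)) (ne_of_lt hxy)
  exact lt_of_le_of_ne (Fin.le_def.mpr hle) hne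

/-! ### The transfer bijection -/

/-- the transfer map of Solomon's theorem -/
noncomputable def Phi (J : Finset (Fin n)) (w' : Equiv.Perm (Fin (n+1)))
    (u : Equiv.Perm (Fin (n+1))) : Equiv.Perm (Fin (n+1)) :=
  (sortPerm J ⇑(w' * u⁻¹))⁻¹ * u

/-- helper: an `IncOn J` injective map reflects order within blocks -/
lemma IncOn.reflect {J : Finset (Fin n)} {f : Fin (n+1) → Fin (n+1)}
    (hf : IncOn J f) (_hinj : Function.Injective f) {x y : Fin (n+1)}
    (hb : bIdx J x = bIdx J y) (hxy : f x < f y) : x < y := by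
  rcases lt_trichotomy x y with h | h | h
  · exact h
  · exact absurd (congrArg f h) (ne_of_lt hxy)
  · exact absurd (hf h hb.symm) (not_lt.mpr hxy.le)

variable {J K : Finset (Fin n)} {w w' : Equiv.Perm (Fin (n+1))}

theorem Phi_mem (h : descentSet w = descentSet w') {u : Equiv.Perm (Fin (n+1))}
    (hu : descentSet u ⊆ K) (hσ : descentSet (w * u⁻¹) ⊆ J) :
    descentSet (Phi J w' u) ⊆ K ∧ descentSet (w' * (Phi J w' u)⁻¹) ⊆ J := by
  set π := sortPerm J ⇑(w' * u⁻¹) with hπ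
  have hπb : ∀ i, bIdx J (π i) = bIdx J i := sortPerm_bIdx J _
  have hπinvb : ∀ i, bIdx J (π⁻¹ i) = bIdx J i := by
    intro i
    conv_rhs => rw [← Equiv.apply_symm_apply π i]
    exact (hπb (π⁻¹ i)).symm
  have hu' : Phi J w' u = π⁻¹ * u := rfl
  have hσ'eq : w' * (Phi J w' u)⁻¹ = w' * u⁻¹ * π := by
    rw [hu']; group
  have hσ'inc : IncOn J ⇑(w' * (Phi J w' u)⁻¹) := by
    rw [hσ'eq]
    have : ⇑(w' * u⁻¹ * π) = ⇑(w' * u⁻¹) ∘ ⇑π := rfl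
    rw [this]
    exact sortPerm_inc (w' * u⁻¹).injective
  have huK : IncOn K ⇑u := descentSet_subset_iff.mp hu
  have hσJ : IncOn J ⇑(w * u⁻¹) := descentSet_subset_iff.mp hσ
  refine ⟨?_, descentSet_subset_iff.mpr hσ'inc⟩
  rw [descentSet_subset_iff]
  intro x y hxy hbK
  have huxy : u x < u y := huK hxy hbK
  have hbu' : ∀ z, bIdx J ((Phi J w' u) z) = bIdx J (u z) := by
    intro z
    rw [hu']
    exact hπinvb (u z)
  rcases lt_or_eq_of_le (bIdx_mono huxy.le : bIdx J (u x) ≤ bIdx J (u y)) with hbb | hbb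
  · apply lt_of_bIdx_lt (J := J)
    rw [hbu' x, hbu' y]; exact hbb
  · -- same J-block case
    have hw' : w' x < w' y := by
      refine chain_lt (⇑w') hxy fun i hxi hiy => ?_
      have h1 : bIdx K i.castSucc = bIdx K i.succ :=
        bIdx_eq_of_between hxi (Fin.castSucc_lt_succ (i := i)).le hiy hbK
      have hucs : u i.castSucc < u i.succ := huK (Fin.castSucc_lt_succ (i := i)) h1
      have hux_le : u x ≤ u i.castSucc := by
        rcases eq_or_lt_of_le hxi with rfl | hlt
        · exact le_rfl
        · exact (huK hlt (bIdx_eq_of_between le_rfl hxi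
            ((Fin.castSucc_lt_succ (i := i)).le.trans hiy) hbK)).le
      have huy_ge : u i.succ ≤ u y := by
        rcases eq_or_lt_of_le hiy with rfl | hlt
        · exact le_rfl
        · exact (huK hlt (bIdx_eq_of_between (hxi.trans (Fin.castSucc_lt_succ (i := i)).le)
            hiy le_rfl hbK)).le
      have h2 : bIdx J (u i.castSucc) = bIdx J (u i.succ) :=
        bIdx_eq_of_between hux_le hucs.le huy_ge hbb
      have hw : w i.castSucc < w i.succ := by
        have := hσJ hucs h2
        simpa using this
      have hnd : i ∉ descentSet w' := by
        rw [← h]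
        simp only [descentSet, mem_filter, mem_univ, true_and, not_lt]
        exact hw.le
      simp only [descentSet, mem_filter, mem_univ, true_and, not_lt] at hnd
      refine lt_of_le_of_ne hnd fun hc => ?_
      exact absurd (w'.injective hc) (Fin.ne_of_lt (Fin.castSucc_lt_succ (i := i)))
    have hkey : (w' * (Phi J w' u)⁻¹) ((Phi J w' u) x)
        < (w' * (Phi J w' u)⁻¹) ((Phi J w' u) y) := by
      simpa using hw'
    have hbsame : bIdx J ((Phi J w' u) x) = bIdx J ((Phi J w' u) y) := by
      rw [hbu' x, hbu' y]; exact hbb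
    exact hσ'inc.reflect (w' * (Phi J w' u)⁻¹).injective hbsame hkey

theorem Phi_roundtrip {u : Equiv.Perm (Fin (n+1))}
    (hσ : descentSet (w * u⁻¹) ⊆ J) :
    Phi J w (Phi J w' u) = u := by
  set π := sortPerm J ⇑(w' * u⁻¹) with hπ
  have hu' : Phi J w' u = π⁻¹ * u := rfl
  have hg' : w * (Phi J w' u)⁻¹ = (w * u⁻¹) * π := by rw [hu']; group
  set ρ := sortPerm J ⇑(w * (Phi J w' u)⁻¹) with hρ
  have hσJ : IncOn J ⇑(w * u⁻¹) := descentSet_subset_iff.mp hσ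
  have hθ : π * ρ = 1 := by
    apply blockPerm_eq_one (J := J)
    · intro i
      have h1 : bIdx J (ρ i) = bIdx J i := sortPerm_bIdx J _ i
      have h2 : bIdx J (π (ρ i)) = bIdx J (ρ i) := sortPerm_bIdx J _ (ρ i)
      simpa [h1] using h2
    · intro x y hxy hb
      have hinc : IncOn J (⇑(w * (Phi J w' u)⁻¹) ∘ ⇑ρ) :=
        sortPerm_inc (w * (Phi J w' u)⁻¹).injective
      have hval := hinc hxy hb
      have hcomp : ∀ z, (⇑(w * (Phi J w' u)⁻¹) ∘ ⇑ρ) z = (w * u⁻¹) ((π * ρ) z) := by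
        intro z
        simp [hg', Equiv.Perm.mul_apply]
      rw [hcomp x, hcomp y] at hval
      have hbθ : bIdx J ((π * ρ) x) = bIdx J ((π * ρ) y) := by
        have h1 : ∀ z, bIdx J ((π * ρ) z) = bIdx J z := by
          intro z
          have ha : bIdx J (ρ z) = bIdx J z := sortPerm_bIdx J _ z
          have hbb : bIdx J (π (ρ z)) = bIdx J (ρ z) := sortPerm_bIdx J _ (ρ z)
          simpa [ha] using hbb
        rw [h1 x, h1 y]; exact hb
      exact (IncOn.reflect hσJ (w * u⁻¹).injective hbθ hval)
  have hρval : ρ = π⁻¹ := by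
    have := congrArg (fun t => π⁻¹ * t) hθ
    simpa [mul_assoc] using this
  show (sortPerm J ⇑(w * (Phi J w' u)⁻¹))⁻¹ * (Phi J w' u) = u
  rw [← hρ, hρval, hu']
  group

/-! ### Counting -/

theorem count_eq (J K : Finset (Fin n)) {w w' : Equiv.Perm (Fin (n+1))}
    (h : descentSet w = descentSet w') :
    (univ.filter fun u : Equiv.Perm (Fin (n+1)) =>
        descentSet (w * u⁻¹) ⊆ J ∧ descentSet u ⊆ K).card
      = (univ.filter fun u : Equiv.Perm (Fin (n+1)) =>
        descentSet (w' * u⁻¹) ⊆ J ∧ descentSet u ⊆ K).card := by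
  apply Finset.card_bij' (fun u _ => Phi J w' u) (fun v _ => Phi J w v)
  · intro u hu
    simp only [mem_filter, mem_univ, true_and] at hu ⊢
    exact ⟨(Phi_mem h hu.2 hu.1).2, (Phi_mem h hu.2 hu.1).1⟩
  · intro v hv
    simp only [mem_filter, mem_univ, true_and] at hv ⊢
    exact ⟨(Phi_mem h.symm hv.2 hv.1).2, (Phi_mem h.symm hv.2 hv.1).1⟩
  · intro u hu
    simp only [mem_filter, mem_univ, true_and] at hu
    exact Phi_roundtrip hu.1
  · intro v hv
    simp only [mem_filter, mem_univ, true_and] at hv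
    exact Phi_roundtrip hv.1

noncomputable def Ecard (w : Equiv.Perm (Fin (n+1))) (J K : Finset (Fin n)) : ℕ :=
  (univ.filter fun u : Equiv.Perm (Fin (n+1)) =>
    descentSet (w * u⁻¹) = J ∧ descentSet u = K).card

lemma ncard_eq_sum (w : Equiv.Perm (Fin (n+1))) (J K : Finset (Fin n)) :
    (univ.filter fun u : Equiv.Perm (Fin (n+1)) =>
        descentSet (w * u⁻¹) ⊆ J ∧ descentSet u ⊆ K).card
      = ∑ p ∈ J.powerset ×ˢ K.powerset, Ecard w p.1 p.2 := by
  classical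
  rw [Finset.card_eq_sum_card_fiberwise
    (f := fun u => (descentSet (w * u⁻¹), descentSet u))
    (t := J.powerset ×ˢ K.powerset)]
  · apply Finset.sum_congr rfl
    intro p hp
    simp only [Finset.mem_product, Finset.mem_powerset] at hp
    unfold Ecard
    congr 1
    ext u
    simp only [mem_filter, mem_univ, true_and, Prod.mk.injEq, Prod.ext_iff]
    constructor
    · rintro ⟨_, h2⟩; exact h2
    · rintro ⟨h1, h2⟩
      exact ⟨⟨h1 ▸ hp.1, h2 ▸ hp.2⟩, h1, h2⟩
  · intro u hu
    simp only [coe_filter, mem_univ, true_and, Set.mem_setOf_eq] at hu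
    simp only [Finset.mem_coe, Finset.mem_product, Finset.mem_powerset]
    exact hu

theorem exact_count_eq {w w' : Equiv.Perm (Fin (n+1))}
    (h : descentSet w = descentSet w') (J K : Finset (Fin n)) :
    Ecard w J K = Ecard w' J K := by
  classical
  suffices H : ∀ (N : ℕ) (J K : Finset (Fin n)), J.card + K.card ≤ N →
      Ecard w J K = Ecard w' J K from H (J.card + K.card) J K le_rfl
  intro N
  induction N using Nat.strong_induction_on with
  | _ N ih =>
    intro J K hJK
    have hmem : (J, K) ∈ J.powerset ×ˢ K.powerset := by
      simp [Finset.mem_product]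
    have key1 := (Finset.add_sum_erase _ (fun p : Finset (Fin n) × Finset (Fin n) =>
      Ecard w p.1 p.2) hmem).symm
    have key2 := (Finset.add_sum_erase _ (fun p : Finset (Fin n) × Finset (Fin n) =>
      Ecard w' p.1 p.2) hmem).symm
    rw [← ncard_eq_sum] at key1 key2
    have hN := count_eq J K h
    have hR : ∑ p ∈ (J.powerset ×ˢ K.powerset).erase (J, K), Ecard w p.1 p.2
        = ∑ p ∈ (J.powerset ×ˢ K.powerset).erase (J, K), Ecard w' p.1 p.2 := by
      apply Finset.sum_congr rfl
      intro p hp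
      have hp' := Finset.mem_of_mem_erase hp
      have hpne := Finset.ne_of_mem_erase hp
      simp only [Finset.mem_product, Finset.mem_powerset] at hp'
      have hlt : p.1.card + p.2.card < J.card + K.card := by
        rcases lt_or_eq_of_le (Finset.card_le_card hp'.1) with h1 | h1
        · have := Finset.card_le_card hp'.2; omega
        · have hJeq : p.1 = J := Finset.eq_of_subset_of_card_le hp'.1 h1.ge
          rcases lt_or_eq_of_le (Finset.card_le_card hp'.2) with h2 | h2
          · omega
          · have hKeq : p.2 = K := Finset.eq_of_subset_of_card_le hp'.2 h2.ge
            exact absurd (Prod.ext hJeq hKeq) hpne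
      exact ih (p.1.card + p.2.card) (lt_of_lt_of_le hlt hJK) p.1 p.2 le_rfl
    dsimp only at key1 key2
    rw [hN, hR] at key1
    omega

/-! ### A canonical representative with prescribed descent set -/

/-- the reverse-block key: sorts blocks in decreasing value order -/
def rkey (S : Finset (Fin n)) (i : Fin (n+1)) : ℕ :=
  (n - bIdx S i) * (n+1) + i.val

lemma rkey_injective (S : Finset (Fin n)) : Function.Injective (rkey S) := by
  intro x y hxy
  have h1 : (rkey S x) % (n+1) = x.val := by
    rw [rkey, Nat.mul_add_mod', Nat.mod_eq_of_lt x.isLt]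
  have h2 : (rkey S y) % (n+1) = y.val := by
    rw [rkey, Nat.mul_add_mod', Nat.mod_eq_of_lt y.isLt]
  apply Fin.ext
  rw [← h1, ← h2, hxy]

/-- a canonical permutation with descent set exactly `S`. -/
noncomputable def rep (S : Finset (Fin n)) : Equiv.Perm (Fin (n+1)) :=
  (Tuple.sort (rkey S))⁻¹

lemma rep_lt_iff (S : Finset (Fin n)) {x y : Fin (n+1)} :
    rep S x < rep S y ↔ rkey S x < rkey S y := by
  have hsm : StrictMono (rkey S ∘ Tuple.sort (rkey S)) :=
    (Tuple.monotone_sort (rkey S)).strictMono_of_injective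
      ((rkey_injective S).comp (Tuple.sort (rkey S)).injective)
  have hx : rkey S x = (rkey S ∘ Tuple.sort (rkey S)) (rep S x) := by
    simp [rep, Function.comp_apply]
  have hy : rkey S y = (rkey S ∘ Tuple.sort (rkey S)) (rep S y) := by
    simp [rep, Function.comp_apply]
  rw [hx, hy]
  exact (hsm.lt_iff_lt).symm

lemma bIdx_le_of_mem {S : Finset (Fin n)} {i : Fin n} (hi : i ∈ S) :
    bIdx S i.castSucc + 1 ≤ n := by
  have hsub : insert i (S.filter fun k : Fin n => k.val < i.castSucc.val) ⊆ S := by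
    intro k hk
    rcases Finset.mem_insert.mp hk with rfl | hk
    · exact hi
    · exact (Finset.mem_filter.mp hk).1
  have hnot : i ∉ (S.filter fun k : Fin n => k.val < i.castSucc.val) := by
    simp [Finset.mem_filter]
  calc bIdx S i.castSucc + 1
      = (insert i (S.filter fun k : Fin n => k.val < i.castSucc.val)).card := by
        rw [Finset.card_insert_of_notMem hnot]; rfl
    _ ≤ S.card := Finset.card_le_card hsub
    _ ≤ n := by simpa using Finset.card_le_card (Finset.subset_univ S)

lemma rep_descentSet (S : Finset (Fin n)) : descentSet (rep S) = S := by
  ext i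
  simp only [descentSet, mem_filter, mem_univ, true_and]
  rw [rep_lt_iff]
  unfold rkey
  rw [bIdx_succ]
  by_cases hi : i ∈ S
  · rw [if_pos hi]
    simp only [hi, iff_true]
    have hb := bIdx_le_of_mem hi
    set b := bIdx S i.castSucc with hbdef
    have h1 : n - (b+1) + 1 = n - b := by omega
    have h2 : (n - (b+1)) * (n+1) + (n+1) = (n - b) * (n+1) := by
      rw [← h1]; ring
    have h3 : (i.succ : ℕ) = i.castSucc + 1 := by simp [Fin.val_succ]
    omega
  · rw [if_neg hi]
    simp only [hi, iff_false, not_lt, Nat.add_zero]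
    have h3 : (i.succ : ℕ) = i.castSucc + 1 := by simp [Fin.val_succ]
    omega

/-! ### The descent algebra -/

/-- the submodule of elements whose coefficients are constant on descent classes -/
noncomputable def Msub (n : ℕ) : Submodule ℚ (MonoidAlgebra ℚ (Equiv.Perm (Fin (n+1)))) where
  carrier := {x | ∀ σ τ : Equiv.Perm (Fin (n+1)), descentSet σ = descentSet τ → x.coeff σ = x.coeff τ}
  add_mem' := by
    intro x y hx hy σ τ h
    rw [MonoidAlgebra.coeff_add, Finsupp.add_apply, Finsupp.add_apply, hx σ τ h, hy σ τ h]
  zero_mem' := by intro σ τ h; rfl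
  smul_mem' := by
    intro c x hx σ τ h
    rw [MonoidAlgebra.coeff_smul, Finsupp.smul_apply, Finsupp.smul_apply, hx σ τ h]

lemma smul_apply' (c : ℚ) (v : MonoidAlgebra ℚ (Equiv.Perm (Fin (n+1))))
    (τ : Equiv.Perm (Fin (n+1))) : (c • v).coeff τ = c * v.coeff τ := rfl

lemma mul_coeff (x y : MonoidAlgebra ℚ (Equiv.Perm (Fin (n+1)))) (w : Equiv.Perm (Fin (n+1))) :
    (x * y).coeff w = ∑ u : Equiv.Perm (Fin (n+1)), x.coeff (w * u⁻¹) * y.coeff u := by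
  classical
  rw [MonoidAlgebra.coeff_mul]
  rw [Finsupp.sum]
  rw [Finset.sum_subset (Finset.subset_univ x.coeff.support) (by
    intro a _ ha
    simp only [Finsupp.notMem_support_iff] at ha
    simp [Finsupp.sum, ha])]
  have : ∀ a₁ : Equiv.Perm (Fin (n+1)),
      (y.coeff.sum fun a₂ b₂ => if a₁ * a₂ = w then x.coeff a₁ * b₂ else 0)
      = ∑ a₂ : Equiv.Perm (Fin (n+1)), if a₁ * a₂ = w then x.coeff a₁ * y.coeff a₂ else 0 := by
    intro a₁
    rw [Finsupp.sum]
    apply Finset.sum_subset (Finset.subset_univ y.coeff.support)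
    intro a _ ha
    simp only [Finsupp.notMem_support_iff] at ha
    simp [ha]
  simp_rw [this]
  rw [Finset.sum_comm]
  apply Finset.sum_congr rfl
  intro u _
  have hcond : ∀ a₁ : Equiv.Perm (Fin (n+1)), (a₁ * u = w) ↔ (a₁ = w * u⁻¹) := by
    intro a₁; constructor
    · intro hh; rw [← hh]; group
    · intro hh; rw [hh]; group
  simp_rw [hcond]
  rw [Finset.sum_ite_eq' Finset.univ (w * u⁻¹) (fun a₁ => x.coeff a₁ * y.coeff u)]
  simp

lemma descentSum_apply (S : Finset (Fin n)) (τ : Equiv.Perm (Fin (n+1))) :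
    (descentSum n S).coeff τ = if descentSet τ = S then 1 else 0 := by
  classical
  unfold descentSum
  rw [MonoidAlgebra.coeff_sum, Finsupp.finset_sum_apply]
  have : ∀ σ ∈ univ.filter (fun σ : Equiv.Perm (Fin (n+1)) => descentSet σ = S),
      (MonoidAlgebra.of ℚ (Equiv.Perm (Fin (n+1))) σ).coeff τ = if σ = τ then (1:ℚ) else 0 := by
    intro σ _
    simp [MonoidAlgebra.of_apply, MonoidAlgebra.coeff_single, Finsupp.single_apply]
  rw [Finset.sum_congr rfl this, Finset.sum_ite_eq' _ τ (fun _ => (1:ℚ))]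
  simp [Finset.mem_filter]

lemma descentSum_mem_Msub (S : Finset (Fin n)) : descentSum n S ∈ Msub n := by
  intro σ τ h
  rw [descentSum_apply, descentSum_apply, h]

lemma eq_sum_of_mem_Msub {x : MonoidAlgebra ℚ (Equiv.Perm (Fin (n+1)))} (hx : x ∈ Msub n) :
    x = ∑ S : Finset (Fin n), x.coeff (rep S) • descentSum n S := by
  classical
  apply MonoidAlgebra.coeff_injective
  ext τ
  rw [MonoidAlgebra.coeff_sum, Finsupp.finset_sum_apply]
  simp_rw [smul_apply', descentSum_apply, mul_ite, mul_one, mul_zero]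
  have : ∀ S : Finset (Fin n), (if descentSet τ = S then x.coeff (rep S) else 0)
      = if S = descentSet τ then x.coeff (rep S) else 0 := by
    intro S; simp [eq_comm]
  simp_rw [this]
  rw [Finset.sum_ite_eq' Finset.univ (descentSet τ) (fun S => x.coeff (rep S))]
  simp only [Finset.mem_univ, if_true]
  exact (hx _ _ (by rw [rep_descentSet])).symm

lemma span_eq_Msub : Submodule.span ℚ (Set.range (descentSum n)) = Msub n := by
  apply le_antisymm
  · rw [Submodule.span_le]
    rintro _ ⟨S, rfl⟩
    exact descentSum_mem_Msub S
  · intro x hx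
    rw [eq_sum_of_mem_Msub hx]
    apply Submodule.sum_mem
    intro S _
    exact Submodule.smul_mem _ _ (Submodule.subset_span ⟨S, rfl⟩)

lemma one_mem_Msub : (1 : MonoidAlgebra ℚ (Equiv.Perm (Fin (n+1)))) ∈ Msub n := by
  intro σ τ h
  have hone : (1 : MonoidAlgebra ℚ (Equiv.Perm (Fin (n+1))))
      = MonoidAlgebra.single 1 1 := rfl
  rw [hone]
  rw [MonoidAlgebra.coeff_single, Finsupp.single_apply, Finsupp.single_apply]
  by_cases hσ : σ = 1
  · have hτ : τ = 1 := by
      apply descentSet_eq_empty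
      rw [← h, hσ, descentSet_one]
    rw [hσ, hτ]
  · have hτ : τ ≠ 1 := by
      intro hc
      apply hσ
      apply descentSet_eq_empty
      rw [h, hc, descentSet_one]
    rw [if_neg (fun hh : (1 : Equiv.Perm (Fin (n+1))) = σ => hσ hh.symm),
      if_neg (fun hh : (1 : Equiv.Perm (Fin (n+1))) = τ => hτ hh.symm)]

lemma mul_mem_Msub {x y : MonoidAlgebra ℚ (Equiv.Perm (Fin (n+1)))}
    (hx : x ∈ Msub n) (hy : y ∈ Msub n) : x * y ∈ Msub n := by
  classical
  intro w w' h
  rw [mul_coeff, mul_coeff]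
  rw [← Finset.sum_fiberwise_of_maps_to
    (g := fun u : Equiv.Perm (Fin (n+1)) => (descentSet (w * u⁻¹), descentSet u))
    (t := Finset.univ) (fun u _ => Finset.mem_univ _)]
  rw [← Finset.sum_fiberwise_of_maps_to
    (g := fun u : Equiv.Perm (Fin (n+1)) => (descentSet (w' * u⁻¹), descentSet u))
    (t := Finset.univ) (fun u _ => Finset.mem_univ _)]
  apply Finset.sum_congr rfl
  intro p _
  have hconst : ∀ (v : Equiv.Perm (Fin (n+1))) (u : Equiv.Perm (Fin (n+1))),
      descentSet (v * u⁻¹) = p.1 → descentSet u = p.2 →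
      x.coeff (v * u⁻¹) * y.coeff u = x.coeff (rep p.1) * y.coeff (rep p.2) := by
    intro v u h1 h2
    rw [hx _ _ (h1.trans (rep_descentSet p.1).symm),
      hy _ _ (h2.trans (rep_descentSet p.2).symm)]
  have hfilter : ∀ v : Equiv.Perm (Fin (n+1)),
      (univ.filter fun u : Equiv.Perm (Fin (n+1)) =>
        (descentSet (v * u⁻¹), descentSet u) = p)
      = (univ.filter fun u : Equiv.Perm (Fin (n+1)) =>
        descentSet (v * u⁻¹) = p.1 ∧ descentSet u = p.2) := by
    intro v
    apply Finset.filter_congr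
    intro u _
    simp [Prod.ext_iff]
  rw [hfilter w, hfilter w']
  have e1 : ∑ u ∈ (univ.filter fun u : Equiv.Perm (Fin (n+1)) =>
        descentSet (w * u⁻¹) = p.1 ∧ descentSet u = p.2), x.coeff (w * u⁻¹) * y.coeff u
      = (univ.filter fun u : Equiv.Perm (Fin (n+1)) =>
        descentSet (w * u⁻¹) = p.1 ∧ descentSet u = p.2).card
          • (x.coeff (rep p.1) * y.coeff (rep p.2)) := by
    rw [Finset.sum_congr rfl fun u hu => by
      simp only [Finset.mem_filter] at hu
      exact hconst w u hu.2.1 hu.2.2]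
    rw [Finset.sum_const]
  have e2 : ∑ u ∈ (univ.filter fun u : Equiv.Perm (Fin (n+1)) =>
        descentSet (w' * u⁻¹) = p.1 ∧ descentSet u = p.2), x.coeff (w' * u⁻¹) * y.coeff u
      = (univ.filter fun u : Equiv.Perm (Fin (n+1)) =>
        descentSet (w' * u⁻¹) = p.1 ∧ descentSet u = p.2).card
          • (x.coeff (rep p.1) * y.coeff (rep p.2)) := by
    rw [Finset.sum_congr rfl fun u hu => by
      simp only [Finset.mem_filter] at hu
      exact hconst w' u hu.2.1 hu.2.2]
    rw [Finset.sum_const]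
  rw [e1, e2]
  have hcards := exact_count_eq h p.1 p.2
  unfold Ecard at hcards
  rw [hcards]

lemma descentSum_linearIndependent :
    LinearIndependent ℚ (descentSum n) := by
  rw [Fintype.linearIndependent_iff]
  intro g hg T
  have := congrArg (fun z : MonoidAlgebra ℚ (Equiv.Perm (Fin (n+1))) => z.coeff (rep T)) hg
  simp only [MonoidAlgebra.coeff_zero, Finsupp.coe_zero, Pi.zero_apply] at this
  rw [MonoidAlgebra.coeff_sum, Finsupp.finset_sum_apply] at this
  simp_rw [smul_apply', descentSum_apply, mul_ite, mul_one, mul_zero,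
    rep_descentSet] at this
  have h2 : ∀ S : Finset (Fin n), (if T = S then g S else 0) = if S = T then g S else 0 := by
    intro S; simp [eq_comm]
  rw [Finset.sum_congr rfl fun S _ => h2 S] at this
  rw [Finset.sum_ite_eq' Finset.univ T g] at this
  simpa using this

end Sol

/-- (Solomon) The span of the descent sums `D_I` is a unital subalgebra of the
group algebra `ℚ[S_{n+1}]`, of dimension `2^n` (i.e. `2^{m-1}` for `S_m`). -/
theorem stmt_15 (n : ℕ) :
    (1 : MonoidAlgebra ℚ (Equiv.Perm (Fin (n + 1)))) ∈
        Submodule.span ℚ (Set.range (descentSum n)) ∧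
    (∀ x ∈ Submodule.span ℚ (Set.range (descentSum n)),
      ∀ y ∈ Submodule.span ℚ (Set.range (descentSum n)),
        x * y ∈ Submodule.span ℚ (Set.range (descentSum n))) ∧
    Module.finrank ℚ ↥(Submodule.span ℚ (Set.range (descentSum n))) = 2 ^ n := by
  refine ⟨?_, ?_, ?_⟩
  · rw [Sol.span_eq_Msub]
    exact Sol.one_mem_Msub
  · intro x hx y hy
    rw [Sol.span_eq_Msub] at *
    exact Sol.mul_mem_Msub hx hy
  · rw [finrank_span_eq_card Sol.descentSum_linearIndependent]
    simp [Fintype.card_finset]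
end
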